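/- arXiv:1512.08379 — 7 statements merged into one kernel-verified Lean document; each statement's English description precedes it below -/
import Mathlib

section
/- Let X_1, …, X_m be independent, identically distributed real-valued random variables on a probability space, and let i be a positive integer with E[|X_1|^i] < ∞. Write a_k = E[X_1^k] for 0 ≤ k ≤ i. Then E[(X_1 + ⋯ + X_m)^i] = ∑_{λ ⊢ i} (m)_{ν_λ} d_λ a_λ, where the sum ranges over all partitions λ of the integer i. -/
open MeasureTheory ProbabilityTheory Finset

/-- `dcoef λ = i! / ((1!)^{r_1}(2!)^{r_2}⋯ r_1! r_2! ⋯)`, the number of set partitions of an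
`i`-element set whose block sizes are the parts of the integer partition `λ`. -/
noncomputable def dcoef {i : ℕ} (lam : Nat.Partition i) : ℝ :=
  (Nat.factorial i : ℝ) /
    ((lam.parts.map fun p => (Nat.factorial p : ℝ)).prod *
     ∏ j ∈ lam.parts.toFinset, (Nat.factorial (lam.parts.count j) : ℝ))

namespace MomentAux

/-- The multiset of nonzero values of `k`. -/
def MSet {m : ℕ} (k : Fin m → ℕ) : Multiset ℕ :=
  (Multiset.map k Finset.univ.val).filter (· ≠ 0)

lemma MSet_sum {m : ℕ} (k : Fin m → ℕ) : (MSet k).sum = ∑ j, k j := by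
  classical
  have h := Multiset.filter_add_not (fun x => x ≠ 0) (Multiset.map k Finset.univ.val)
  have h2 : (Multiset.filter (fun x => ¬ x ≠ 0) (Multiset.map k Finset.univ.val)).sum = 0 :=
    Multiset.sum_eq_zero (fun x hx => by simpa using Multiset.of_mem_filter hx)
  have h3 : (Multiset.map k Finset.univ.val).sum = ∑ j, k j :=
    (Finset.sum_eq_multiset_sum _ _).symm
  rw [← h3]
  conv_rhs => rw [← h]
  rw [Multiset.sum_add, h2, add_zero]
  rfl

lemma MSet_cons {m : ℕ} (v : ℕ) (k : Fin m → ℕ) :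
    MSet (Fin.cons v k) = (if v ≠ 0 then {v} else 0) + MSet k := by
  classical
  unfold MSet
  rw [Fin.univ_succ, Finset.cons_val, Multiset.map_cons, Multiset.filter_cons,
    Finset.map_val, Multiset.map_map, Fin.cons_zero]
  congr 1

/-- The set of `k : Fin m → ℕ` whose multiset of nonzero values is `P`. -/
noncomputable def fib (m : ℕ) (P : Multiset ℕ) : Finset (Fin m → ℕ) :=
  (Finset.piAntidiag Finset.univ P.sum).filter (fun k => MSet k = P)

lemma mem_fib {m : ℕ} {P : Multiset ℕ} {k : Fin m → ℕ} :
    k ∈ fib m P ↔ MSet k = P := by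
  simp only [fib, Finset.mem_filter, Finset.mem_piAntidiag, and_iff_right_iff_imp]
  intro h
  refine ⟨?_, fun j hj => Finset.mem_univ _⟩
  rw [← h, MSet_sum]

lemma prod_count_cons (Q : Multiset ℕ) (v : ℕ) :
    ∏ u ∈ (v ::ₘ Q).toFinset, Nat.factorial ((v ::ₘ Q).count u) =
      (Q.count v + 1) * ∏ u ∈ Q.toFinset, Nat.factorial (Q.count u) := by
  classical
  by_cases hv : v ∈ Q
  · have hvt : v ∈ Q.toFinset := Multiset.mem_toFinset.2 hv
    have ht : (v ::ₘ Q).toFinset = Q.toFinset := by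
      rw [Multiset.toFinset_cons, Finset.insert_eq_self.2 hvt]
    rw [ht, ← Finset.prod_erase_mul _ _ hvt, ← Finset.prod_erase_mul _ _ hvt]
    have hcongr : ∀ u ∈ Q.toFinset.erase v,
        Nat.factorial ((v ::ₘ Q).count u) = Nat.factorial (Q.count u) := fun u hu => by
      rw [Multiset.count_cons_of_ne (Finset.ne_of_mem_erase hu)]
    rw [Finset.prod_congr rfl hcongr, Multiset.count_cons_self, Nat.factorial_succ]
    ring
  · rw [Multiset.toFinset_cons, Finset.prod_insert (by simpa using hv),
      Multiset.count_cons_self, Multiset.count_eq_zero.2 hv]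
    have hcongr : ∀ u ∈ Q.toFinset,
        Nat.factorial ((v ::ₘ Q).count u) = Nat.factorial (Q.count u) := fun u hu => by
      rw [Multiset.count_cons_of_ne (by rintro rfl; exact hv (Multiset.mem_toFinset.1 hu))]
    rw [Finset.prod_congr rfl hcongr]
    simp [Nat.factorial]

lemma prod_count_erase (P : Multiset ℕ) {v : ℕ} (hv : v ∈ P) :
    P.count v * ∏ u ∈ (P.erase v).toFinset, Nat.factorial ((P.erase v).count u) =
      ∏ u ∈ P.toFinset, Nat.factorial (P.count u) := by
  classical
  conv_rhs => rw [← Multiset.cons_erase hv]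
  rw [prod_count_cons]
  congr 1
  rw [Multiset.count_erase_self]
  have : 0 < P.count v := Multiset.count_pos.2 hv
  omega

lemma desc_rec (m c : ℕ) :
    m.descFactorial c + c * m.descFactorial (c - 1) = (m + 1).descFactorial c := by
  cases c with
  | zero => simp
  | succ c' =>
    rw [Nat.succ_sub_one, Nat.succ_descFactorial_succ, Nat.descFactorial_succ]
    by_cases h : c' ≤ m
    · rw [← add_mul]
      congr 1
      omega
    · have h0 : m.descFactorial c' = 0 := Nat.descFactorial_eq_zero_iff_lt.2 (by omega)
      simp [h0]

lemma fiber_card (m : ℕ) (P : Multiset ℕ) (hP : (0:ℕ) ∉ P) (v : ℕ)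
    (hv : v = 0 ∨ v ∈ P) :
    ((fib (m + 1) P).filter (fun k => k 0 = v)).card = (fib m (P.erase v)).card := by
  classical
  refine Finset.card_nbij' (fun k => Fin.tail k) (fun k' => Fin.cons v k') ?_ ?_ ?_ ?_
  · intro k hk
    simp only [Finset.mem_coe, Finset.mem_filter] at hk
    obtain ⟨hk1, hk2⟩ := hk
    have hms : MSet k = P := mem_fib.1 hk1
    have hcons : MSet (Fin.cons (k 0) (Fin.tail k)) = MSet k := by
      rw [Fin.cons_self_tail]
    rw [MSet_cons, hk2] at hcons
    simp only [Finset.mem_coe, mem_fib]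
    rcases hv with rfl | hvP
    · simp only [ne_eq, not_true_eq_false, if_false, zero_add] at hcons
      rw [hcons, hms, Multiset.erase_of_notMem hP]
    · have hv0 : v ≠ 0 := fun h => hP (h ▸ hvP)
      rw [if_pos hv0] at hcons
      have : P = v ::ₘ MSet (Fin.tail k) := by
        rw [← hms, ← hcons, Multiset.singleton_add]
      rw [this, Multiset.erase_cons_head]
  · intro k' hk'
    have hms : MSet k' = P.erase v := mem_fib.1 hk'
    simp only [Finset.mem_coe, Finset.mem_filter]
    refine ⟨?_, Fin.cons_zero _ _⟩
    rw [mem_fib, MSet_cons, hms]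
    rcases hv with rfl | hvP
    · simp [Multiset.erase_of_notMem hP]
    · have hv0 : v ≠ 0 := fun h => hP (h ▸ hvP)
      rw [if_pos hv0, Multiset.singleton_add, Multiset.cons_erase hvP]
  · intro k hk
    simp only [Finset.mem_coe, Finset.mem_filter] at hk
    obtain ⟨-, hk2⟩ := hk
    subst hk2
    exact Fin.cons_self_tail k
  · intro k' _
    exact Fin.tail_cons _ _

lemma card_fib (m : ℕ) (P : Multiset ℕ) (hP : (0:ℕ) ∉ P) :
    (fib m P).card * ∏ v ∈ P.toFinset, Nat.factorial (P.count v) =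
      m.descFactorial (Multiset.card P) := by
  classical
  induction m generalizing P with
  | zero =>
    by_cases h0 : P = 0
    · subst h0
      have : fib 0 (0 : Multiset ℕ) = {fun j => j.elim0} := by
        ext k
        simp only [mem_fib, Finset.mem_singleton]
        constructor
        · intro _; exact Subsingleton.elim _ _
        · intro _
          show MSet k = 0
          unfold MSet
          have : (Finset.univ : Finset (Fin 0)).val = 0 := rfl
          rw [this]; rfl
      rw [this]
      simp
    · have he : fib 0 P = ∅ := by
        ext k
        simp only [mem_fib, Finset.notMem_empty, iff_false]
        intro h
        apply h0
        rw [← h]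
        show MSet k = 0
        unfold MSet
        have : (Finset.univ : Finset (Fin 0)).val = 0 := rfl
        rw [this]; rfl
      obtain ⟨c, hc⟩ : ∃ c, Multiset.card P = c + 1 := by
        have : 0 < Multiset.card P := Multiset.card_pos.2 h0
        exact ⟨Multiset.card P - 1, by omega⟩
      rw [he, hc]
      simp
  | succ m ih =>
    have hmaps : ∀ k ∈ fib (m + 1) P, k 0 ∈ insert 0 P.toFinset := by
      intro k hk
      by_cases h : k 0 = 0
      · rw [h]; exact Finset.mem_insert_self _ _
      · refine Finset.mem_insert_of_mem (Multiset.mem_toFinset.2 ?_)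
        rw [← mem_fib.1 hk]
        unfold MSet
        rw [Multiset.mem_filter]
        refine ⟨Multiset.mem_map_of_mem _ ?_, h⟩
        exact Finset.mem_univ_val _
    rw [Finset.card_eq_sum_card_fiberwise hmaps]
    have h0nt : (0:ℕ) ∉ P.toFinset := fun h => hP (Multiset.mem_toFinset.1 h)
    rw [Finset.sum_insert h0nt]
    rw [fiber_card m P hP 0 (Or.inl rfl), Multiset.erase_of_notMem hP]
    rw [add_mul, Finset.sum_mul, ih P hP]
    have hterm : ∀ v ∈ P.toFinset,
        ((fib (m + 1) P).filter (fun k => k 0 = v)).card *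
          ∏ u ∈ P.toFinset, Nat.factorial (P.count u) =
        P.count v * m.descFactorial (Multiset.card P - 1) := by
      intro v hv
      have hvP : v ∈ P := Multiset.mem_toFinset.1 hv
      rw [fiber_card m P hP v (Or.inr hvP)]
      rw [← prod_count_erase P hvP]
      have hP' : (0:ℕ) ∉ P.erase v := fun h => hP (Multiset.mem_of_mem_erase h)
      have := ih (P.erase v) hP'
      rw [Multiset.card_erase_of_mem hvP] at this
      calc (fib m (P.erase v)).card *
            (P.count v * ∏ u ∈ (P.erase v).toFinset, Nat.factorial ((P.erase v).count u))
          = P.count v * ((fib m (P.erase v)).card *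
            ∏ u ∈ (P.erase v).toFinset, Nat.factorial ((P.erase v).count u)) := by ring
        _ = P.count v * m.descFactorial (Multiset.card P - 1) := by rw [this]; rfl
    rw [Finset.sum_congr rfl hterm, ← Finset.sum_mul, Multiset.toFinset_sum_count_eq]
    exact desc_rec m (Multiset.card P)

noncomputable def toPart (m i : ℕ) (k : Fin m → ℕ) : Nat.Partition i :=
  if h : (MSet k).sum = i then
    ⟨MSet k, fun {x} hx => Nat.pos_of_ne_zero
      (Multiset.of_mem_filter (p := fun y => y ≠ 0) hx), h⟩
  else default

lemma prod_eq_MSet_prod {M : Type*} [CommMonoid M] {m : ℕ} (k : Fin m → ℕ)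
    (g : ℕ → M) (hg : g 0 = 1) :
    ∏ j, g (k j) = ((MSet k).map g).prod := by
  classical
  rw [← Finset.prod_filter_mul_prod_filter_not Finset.univ (fun j => k j ≠ 0)]
  have h2 : ∏ j ∈ Finset.univ.filter (fun j => ¬ k j ≠ 0), g (k j) = 1 :=
    Finset.prod_eq_one (fun j hj => by
      have : k j = 0 := by simpa using (Finset.mem_filter.1 hj).2
      rw [this, hg])
  rw [h2, mul_one]
  unfold MSet
  rw [Multiset.filter_map, Multiset.map_map]
  rw [Finset.prod_eq_multiset_prod, Finset.filter_val]
  rfl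

lemma integral_prod_eq {Ω : Type*} {mΩ : MeasurableSpace Ω} {μ : Measure Ω}
    [IsProbabilityMeasure μ] {ι : Type*} {f : ι → Ω → ℝ}
    (hmeas : ∀ j, Measurable (f j))
    (hindep : iIndepFun f μ)
    (hint : ∀ j, Integrable (f j) μ) (s : Finset ι) :
    Integrable (fun ω => ∏ j ∈ s, f j ω) μ ∧
      ∫ ω, ∏ j ∈ s, f j ω ∂μ = ∏ j ∈ s, ∫ ω, f j ω ∂μ := by
  classical
  induction s using Finset.induction_on with
  | empty => exact ⟨by simpa using (integrable_const (1:ℝ)), by simp⟩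
  | @insert a s ha ih =>
    have hprod : (fun ω => ∏ j ∈ s, f j ω) = (∏ j ∈ s, f j) := by
      funext ω; exact (Finset.prod_apply ω s f).symm
    have hIndep : IndepFun (∏ j ∈ s, f j) (f a) μ :=
      hindep.indepFun_finsetProd_of_notMem hmeas ha
    have h1 : Integrable (∏ j ∈ s, f j) μ := by rw [← hprod]; exact ih.1
    have hInt : Integrable ((f a) * (∏ j ∈ s, f j)) μ :=
      hIndep.symm.integrable_mul (hint a) h1
    have hEq := hIndep.symm.integral_mul_eq_mul_integral (hint a).1 h1.1
    have hfun : (fun ω => ∏ j ∈ insert a s, f j ω) = (f a) * (∏ j ∈ s, f j) := by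
      funext ω
      rw [Finset.prod_insert ha, Pi.mul_apply, Finset.prod_apply]
    constructor
    · rw [hfun]; exact hInt
    · calc ∫ ω, ∏ j ∈ insert a s, f j ω ∂μ
          = ∫ ω, ((f a) * (∏ j ∈ s, f j)) ω ∂μ := by rw [← hfun]
        _ = (∫ ω, f a ω ∂μ) * ∫ ω, (∏ j ∈ s, f j) ω ∂μ := hEq
        _ = ∏ j ∈ insert a s, ∫ ω, f j ω ∂μ := by
            rw [Finset.prod_insert ha, ← ih.2]
            congr 1
            rw [hprod]

end MomentAux

/-- Moments of a sum of `m` i.i.d. random variables: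
`E[(X_1 + ⋯ + X_m)^i] = ∑_{λ ⊢ i} (m)_{ν_λ} d_λ a_λ`. -/
theorem moment_sum_iid {Ω : Type*} {mΩ : MeasurableSpace Ω} (μ : Measure Ω)
    [IsProbabilityMeasure μ] (m : ℕ) (hm : 0 < m)
    (X : Fin m → Ω → ℝ) (hmeas : ∀ j, Measurable (X j))
    (hindep : iIndepFun X μ)
    (hident : ∀ j, IdentDistrib (X j) (X ⟨0, hm⟩) μ μ)
    (i : ℕ) (hi : 1 ≤ i)
    (hint : Integrable (fun ω => |X ⟨0, hm⟩ ω| ^ i) μ)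
    (a : ℕ → ℝ) (ha : ∀ k ≤ i, a k = ∫ ω, (X ⟨0, hm⟩ ω) ^ k ∂μ) :
    ∫ ω, (∑ j, X j ω) ^ i ∂μ =
      ∑ lam : Nat.Partition i,
        (m.descFactorial lam.parts.card : ℝ) * dcoef lam * (lam.parts.map a).prod := by
  classical
  set X0 : Ω → ℝ := X ⟨0, hm⟩ with hX0
  have ha0 : a 0 = 1 := by
    rw [ha 0 (Nat.zero_le i)]
    simp
  have hX0k : ∀ k, k ≤ i → Integrable (fun ω => X0 ω ^ k) μ := by
    intro k hk
    have hb : Integrable (fun ω => 1 + |X0 ω| ^ i) μ := (integrable_const 1).add hint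
    refine hb.mono' (((hmeas _).pow_const k).aestronglyMeasurable) ?_
    filter_upwards with ω
    have h1 : ‖X0 ω ^ k‖ = |X0 ω| ^ k := by rw [Real.norm_eq_abs, abs_pow]
    rw [h1]
    rcases le_total (|X0 ω|) 1 with h | h
    · have h2 : |X0 ω| ^ k ≤ 1 := pow_le_one₀ (abs_nonneg _) h
      have h3 : (0:ℝ) ≤ |X0 ω| ^ i := pow_nonneg (abs_nonneg _) i
      linarith
    · have h2 : |X0 ω| ^ k ≤ |X0 ω| ^ i := pow_le_pow_right₀ h hk
      linarith
  have hidk : ∀ (j : Fin m) (k : ℕ),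
      IdentDistrib (fun ω => X j ω ^ k) (fun ω => X0 ω ^ k) μ μ :=
    fun j k => (hident j).comp (measurable_id.pow_const k)
  have hXjk : ∀ (j : Fin m) (k : ℕ), k ≤ i → Integrable (fun ω => X j ω ^ k) μ :=
    fun j k hk => (hidk j k).integrable_iff.2 (hX0k k hk)
  have hmom : ∀ (j : Fin m) (k : ℕ), k ≤ i → ∫ ω, X j ω ^ k ∂μ = a k := by
    intro j k hk
    rw [ha k hk]
    exact (hidk j k).integral_eq
  have hindepk : ∀ k : Fin m → ℕ, iIndepFun
      (fun j => fun ω => X j ω ^ k j) μ := by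
    intro k
    exact hindep.comp (fun j => fun x : ℝ => x ^ k j)
      (fun j => measurable_id.pow_const (k j))
  have key : ∀ k ∈ Finset.piAntidiag (Finset.univ : Finset (Fin m)) i,
      (Integrable (fun ω => ∏ j, X j ω ^ k j) μ ∧
       ∫ ω, ∏ j, X j ω ^ k j ∂μ = ∏ j, a (k j)) := by
    intro k hk
    obtain ⟨hsum, -⟩ := Finset.mem_piAntidiag.1 hk
    have hkle : ∀ j, k j ≤ i := fun j => by
      rw [← hsum]
      exact Finset.single_le_sum (fun j _ => Nat.zero_le _) (Finset.mem_univ j)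
    obtain ⟨hI, hE⟩ := MomentAux.integral_prod_eq (μ := μ)
      (f := fun j => fun ω => X j ω ^ k j)
      (fun j => (hmeas j).pow_const (k j)) (hindepk k)
      (fun j => hXjk j (k j) (hkle j)) Finset.univ
    exact ⟨hI, by rw [hE]; exact Finset.prod_congr rfl fun j _ => hmom j (k j) (hkle j)⟩
  have step2 : ∫ ω, (∑ j, X j ω) ^ i ∂μ =
      ∑ k ∈ Finset.piAntidiag (Finset.univ : Finset (Fin m)) i,
        (Nat.multinomial Finset.univ k : ℝ) * ∏ j, a (k j) := by
    have hpt : (fun ω => (∑ j, X j ω) ^ i) = fun ω =>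
        ∑ k ∈ Finset.piAntidiag (Finset.univ : Finset (Fin m)) i,
          (Nat.multinomial Finset.univ k : ℝ) * ∏ j, X j ω ^ k j := by
      funext ω
      exact Finset.sum_pow_eq_sum_piAntidiag Finset.univ (fun j => X j ω) i
    rw [hpt, integral_finset_sum _ (fun k hk => ((key k hk).1.const_mul _))]
    refine Finset.sum_congr rfl fun k hk => ?_
    rw [integral_const_mul, (key k hk).2]
  rw [step2]
  rw [← Finset.sum_fiberwise (Finset.piAntidiag (Finset.univ : Finset (Fin m)) i)
    (MomentAux.toPart m i) (fun k => (Nat.multinomial Finset.univ k : ℝ) * ∏ j, a (k j))]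
  refine Finset.sum_congr rfl fun lam _ => ?_
  have hfilter : (Finset.piAntidiag (Finset.univ : Finset (Fin m)) i).filter
      (fun k => MomentAux.toPart m i k = lam) = MomentAux.fib m lam.parts := by
    ext k
    simp only [Finset.mem_filter, Finset.mem_piAntidiag, MomentAux.mem_fib]
    constructor
    · rintro ⟨⟨hsum, -⟩, hpt⟩
      have hs : (MomentAux.MSet k).sum = i := by rw [MomentAux.MSet_sum]; exact hsum
      rw [← hpt]
      unfold MomentAux.toPart
      rw [dif_pos hs]
    · intro hms
      have hs : (MomentAux.MSet k).sum = i := by rw [hms, lam.parts_sum]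
      refine ⟨⟨?_, fun j _ => Finset.mem_univ j⟩, ?_⟩
      · rw [← MomentAux.MSet_sum, hs]
      · unfold MomentAux.toPart
        rw [dif_pos hs]
        exact Nat.Partition.ext hms
  rw [hfilter]
  have hP0 : (0:ℕ) ∉ lam.parts := fun h => (lam.parts_pos h).ne' rfl
  set Pprod : ℝ := (lam.parts.map fun p => (Nat.factorial p : ℝ)).prod with hPp
  set Rprod : ℝ := ∏ v ∈ lam.parts.toFinset, (Nat.factorial (lam.parts.count v) : ℝ) with hRp
  have hPcast : ((lam.parts.map Nat.factorial).prod : ℝ) = Pprod := by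
    rw [hPp, Nat.cast_multiset_prod, Multiset.map_map]
    rfl
  have hPpos : 0 < Pprod := by
    rw [← hPcast]
    exact_mod_cast Multiset.prod_pos fun x hx => by
      obtain ⟨p, -, rfl⟩ := Multiset.mem_map.1 hx
      exact Nat.factorial_pos p
  have hRpos : 0 < Rprod := by
    rw [hRp]; exact Finset.prod_pos fun v _ => by exact_mod_cast Nat.factorial_pos _
  have hval : ∀ k ∈ MomentAux.fib m lam.parts,
      (Nat.multinomial Finset.univ k : ℝ) * ∏ j, a (k j) =
        (Nat.factorial i : ℝ) / Pprod * (lam.parts.map a).prod := by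
    intro k hk
    have hms : MomentAux.MSet k = lam.parts := MomentAux.mem_fib.1 hk
    have hA : ∏ j, a (k j) = (lam.parts.map a).prod := by
      rw [MomentAux.prod_eq_MSet_prod k a ha0, hms]
    have hBnat : (∏ j, Nat.factorial (k j)) = (lam.parts.map Nat.factorial).prod := by
      rw [MomentAux.prod_eq_MSet_prod k Nat.factorial rfl, hms]
    have hsum : ∑ j, k j = i := by rw [← MomentAux.MSet_sum, hms, lam.parts_sum]
    have hspec := Nat.multinomial_spec Finset.univ k
    rw [hsum, hBnat] at hspec
    have hcast : Pprod * (Nat.multinomial Finset.univ k : ℝ) = (Nat.factorial i : ℝ) := by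
      rw [← hPcast]
      exact_mod_cast congrArg (Nat.cast : ℕ → ℝ) hspec
    rw [hA]
    congr 1
    rw [eq_div_iff hPpos.ne']
    linarith [hcast]
  rw [Finset.sum_congr rfl hval, Finset.sum_const, nsmul_eq_mul]
  have hcard := MomentAux.card_fib m lam.parts hP0
  have hcardR : ((MomentAux.fib m lam.parts).card : ℝ) * Rprod =
      (m.descFactorial (Multiset.card lam.parts) : ℝ) := by
    rw [hRp]
    exact_mod_cast congrArg (Nat.cast : ℕ → ℝ) hcard
  unfold dcoef
  rw [← hPp, ← hRp]
  have hcardeq : ((MomentAux.fib m lam.parts).card : ℝ) =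
      (m.descFactorial (Multiset.card lam.parts) : ℝ) / Rprod := by
    rw [eq_div_iff hRpos.ne']
    exact hcardR
  rw [hcardeq]
  field_simp
end

section
/- Let a : ℕ → ℝ be a sequence with a_0 = 1. For each positive integer i define the i-th factorial moment a_{(i)} = ∑_{k=0}^{i} s(i,k) a_k, where the signed Stirling numbers of the first kind s(i,k) are the coefficients of the falling-factorial polynomial, x(x−1)⋯(x−i+1) = ∑_{k=0}^{i} s(i,k) x^k. Then a_{(i)} = 1 for every i ≥ 1 if and only if a_i = 𝔅_i for every i ≥ 1, where 𝔅_i is the i-th Bell number, i.e. the number of set partitions of an i-element set. -/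
open Finset Polynomial

/-- The `i`-th Bell number: the number of partitions of an `i`-element set into nonempty
blocks. -/
noncomputable def bellNumber (i : ℕ) : ℕ :=
  Fintype.card (Finpartition (Finset.univ : Finset (Fin i)))

namespace BellAux

variable {α β : Type*} [DecidableEq α] [DecidableEq β]

noncomputable def partEquivMap (f : α ↪ β) (s : Finset α) : Finpartition s ≃ Finpartition (s.map f) where
  toFun P :=
    { parts := P.parts.image (Finset.map f)
      supIndep := by
        rw [Finset.supIndep_iff_pairwiseDisjoint]
        rintro x hx y hy hne
        simp only [coe_image, Set.mem_image, mem_coe] at hx hy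
        obtain ⟨t, ht, rfl⟩ := hx
        obtain ⟨u, hu, rfl⟩ := hy
        have htu : t ≠ u := fun h => hne (by rw [h])
        exact (Finset.disjoint_map f).2 (P.disjoint ht hu htu)
      sup_parts := by
        rw [Finset.sup_image]
        have : ((id : Finset β → Finset β) ∘ Finset.map f) = (Finset.map f ∘ id) := rfl
        rw [this, ← Finset.comp_sup_eq_sup_comp (Finset.map f)
          (fun x y => Finset.map_union x y) (by simp), P.sup_parts]
      bot_notMem := by
        simp only [bot_eq_empty, mem_image, not_exists]
        rintro t ⟨ht, h⟩
        exact P.bot_notMem (by rwa [Finset.map_eq_empty.1 h] at ht) }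
  invFun Q :=
    { parts := Q.parts.image (fun q => q.preimage f f.injective.injOn)
      supIndep := by
        rw [Finset.supIndep_iff_pairwiseDisjoint]
        rintro x hx y hy hne
        simp only [coe_image, Set.mem_image, mem_coe] at hx hy
        obtain ⟨t, ht, rfl⟩ := hx
        obtain ⟨u, hu, rfl⟩ := hy
        have htu : t ≠ u := fun h => hne (by rw [h])
        have h2 : Disjoint t u := Q.disjoint ht hu htu
        show Disjoint (t.preimage f f.injective.injOn) (u.preimage f f.injective.injOn)
        rw [← Finset.disjoint_coe, Finset.coe_preimage, Finset.coe_preimage]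
        exact Disjoint.preimage _ (Finset.disjoint_coe.2 h2)
      sup_parts := by
        rw [Finset.sup_image]
        have : ((id : Finset α → Finset α) ∘ (fun q : Finset β => q.preimage f f.injective.injOn))
            = ((fun q : Finset β => q.preimage f f.injective.injOn) ∘ id) := rfl
        rw [this, ← Finset.comp_sup_eq_sup_comp (fun q : Finset β => q.preimage f f.injective.injOn)
          (fun x y => Finset.preimage_union _) (by simp), Q.sup_parts, Finset.preimage_map]
      bot_notMem := by
        simp only [bot_eq_empty, mem_image, not_exists]
        rintro q ⟨hq, h⟩
        obtain ⟨b, hb⟩ := Q.nonempty_of_mem_parts hq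
        have hbs : b ∈ s.map f := Q.le hq hb
        obtain ⟨x, -, rfl⟩ := Finset.mem_map.1 hbs
        have : x ∈ q.preimage f f.injective.injOn := Finset.mem_preimage.2 hb
        rw [h] at this
        exact absurd this (Finset.notMem_empty x) }
  left_inv P := by
    ext1
    simp only [Finset.image_image]
    rw [show ((fun q : Finset β => q.preimage f f.injective.injOn) ∘ Finset.map f)
        = id from funext fun t => Finset.preimage_map f t, Finset.image_id]
  right_inv Q := by
    ext1
    simp only [Finset.image_image]
    rw [Finset.image_congr (g := id), Finset.image_id]
    intro q hq
    simp only [mem_coe] at hq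
    simp only [Function.comp_apply, id]
    classical
    rw [Finset.map_eq_image, Finset.image_preimage]
    refine Finset.filter_true_of_mem fun b hb => ?_
    have hbs : b ∈ s.map f := Q.le hq hb
    obtain ⟨x, -, rfl⟩ := Finset.mem_map.1 hbs
    exact Set.mem_range_self x


lemma nat_card_finpartition (s : Finset α) : Nat.card (Finpartition s) = bellNumber s.card := by
  classical
  have h1 : Nat.card (Finpartition (univ : Finset ↥s)) = Nat.card (Finpartition s) := by
    have h := Nat.card_congr (partEquivMap (Function.Embedding.subtype (· ∈ s)) (univ : Finset ↥s))
    rwa [show (univ : Finset ↥s).map (Function.Embedding.subtype _) = s by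
      rw [univ_eq_attach]; exact attach_map_val] at h
  have h2 : Nat.card (Finpartition (univ : Finset (Fin s.card)))
      = Nat.card (Finpartition (univ : Finset ↥s)) := by
    have h := Nat.card_congr (partEquivMap s.equivFin.symm.toEmbedding (univ : Finset (Fin s.card)))
    rwa [Finset.map_univ_equiv] at h
  rw [← h1, ← h2, bellNumber, Nat.card_eq_fintype_card]

lemma avoid_parts_of_mem {s : Finset α} (P : Finpartition s) {b : Finset α} (hb : b ∈ P.parts) :
    (P.avoid b).parts = P.parts.erase b := by
  ext c
  rw [Finpartition.mem_avoid, mem_erase]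
  constructor
  · rintro ⟨d, hd, hdb, rfl⟩
    have hne : d ≠ b := fun h => hdb (h ▸ le_rfl)
    have hdisj : Disjoint d b := P.disjoint hd hb hne
    rw [hdisj.sdiff_eq_left]
    exact ⟨hne, hd⟩
  · rintro ⟨hne, hc⟩
    have hdisj : Disjoint c b := P.disjoint hc hb hne
    refine ⟨c, hc, ?_, hdisj.sdiff_eq_left⟩
    intro hle
    exact P.bot_notMem (by rwa [hdisj.eq_bot_of_le hle] at hc)

noncomputable def bellEquiv (n : ℕ) :
    Finpartition (univ : Finset (Fin (n + 1))) ≃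
      Σ s : {s : Finset (Fin (n + 1)) // Fin.last n ∈ s},
        Finpartition ((univ : Finset (Fin (n + 1))) \ (s : Finset (Fin (n + 1)))) where
  toFun P := ⟨⟨P.part (Fin.last n), P.mem_part (mem_univ _)⟩, P.avoid (P.part (Fin.last n))⟩
  invFun x := x.2.extend (b := (x.1 : Finset (Fin (n + 1))))
    (by rw [bot_eq_empty]; exact Finset.ne_empty_of_mem x.1.2)
    sdiff_disjoint (sdiff_sup_cancel le_top)
  left_inv P := by
    ext1
    simp only [Finpartition.extend_parts]
    rw [avoid_parts_of_mem P (P.part_mem.2 (mem_univ _)),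
      insert_erase (P.part_mem.2 (mem_univ _))]
  right_inv := by
    rintro ⟨⟨s, hs⟩, Q⟩
    set E := Q.extend (b := s) (by rw [bot_eq_empty]; exact Finset.ne_empty_of_mem hs)
      sdiff_disjoint (sdiff_sup_cancel le_top) with hE
    have hsE : s ∈ E.parts := by rw [hE]; simp [Finpartition.extend_parts]
    have h1 : E.part (Fin.last n) = s := E.part_eq_of_mem hsE hs
    have hsQ : s ∉ Q.parts := by
      intro h
      have hle : s ≤ univ \ s := Q.le h
      have hss : Disjoint s s := Finset.sdiff_disjoint.mono_left hle
      exact absurd (disjoint_self.1 hss) (by rw [bot_eq_empty]; exact Finset.ne_empty_of_mem hs)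
    have h2 : E.avoid s = Q := by
      ext1
      rw [avoid_parts_of_mem E hsE, hE]
      simp only [Finpartition.extend_parts]
      exact erase_insert hsQ
    show (⟨⟨E.part (Fin.last n), E.mem_part (mem_univ _)⟩, E.avoid (E.part (Fin.last n))⟩ :
      Σ s : {s : Finset (Fin (n + 1)) // Fin.last n ∈ s},
        Finpartition ((univ : Finset (Fin (n + 1))) \ (s : Finset (Fin (n + 1))))) = ⟨⟨s, hs⟩, Q⟩
    refine Sigma.ext (Subtype.ext h1) ?_
    show HEq (E.avoid (E.part (Fin.last n))) Q
    rw [← h2, h1]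

lemma bell_rec (n : ℕ) :
    bellNumber (n + 1) = ∑ k ∈ range (n + 1), n.choose k * bellNumber k := by
  classical
  have h0 : bellNumber (n + 1)
      = ∑ s : {s : Finset (Fin (n + 1)) // Fin.last n ∈ s},
          bellNumber (((univ : Finset (Fin (n + 1))) \ (s : Finset (Fin (n + 1)))).card) := by
    rw [bellNumber, Fintype.card_congr (bellEquiv n), Fintype.card_sigma]
    refine Fintype.sum_congr _ _ fun s => ?_
    rw [← Nat.card_eq_fintype_card, nat_card_finpartition]
  rw [h0]
  rw [← Finset.sum_subtype (univ.filter (fun s : Finset (Fin (n + 1)) => Fin.last n ∈ s))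
    (fun s => by simp) (fun s => bellNumber ((univ \ s).card))]
  have h1 : ∑ s ∈ univ.filter (fun s : Finset (Fin (n + 1)) => Fin.last n ∈ s),
      bellNumber ((univ \ s).card)
      = ∑ t ∈ (univ.erase (Fin.last n)).powerset, bellNumber (n - t.card) := by
    refine Finset.sum_nbij' (fun s => s.erase (Fin.last n)) (fun t => insert (Fin.last n) t)
      ?_ ?_ ?_ ?_ ?_
    · intro s hs
      simp only [mem_filter, mem_univ, true_and] at hs
      exact mem_powerset.2 (erase_subset_erase _ (subset_univ s))
    · intro t ht
      simp
    · intro s hs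
      simp only [mem_filter, mem_univ, true_and] at hs
      exact insert_erase hs
    · intro t ht
      refine erase_insert fun h => ?_
      exact absurd ((mem_powerset.1 ht) h) (notMem_erase _ _)
    · intro s hs
      simp only [mem_filter, mem_univ, true_and] at hs
      have hcard : s.card ≠ 0 := Finset.card_ne_zero_of_mem hs
      rw [card_sdiff_of_subset (subset_univ s), card_univ, Fintype.card_fin, card_erase_of_mem hs]
      congr 1
      omega
  rw [h1, Finset.sum_powerset, card_erase_of_mem (mem_univ _), card_univ, Fintype.card_fin]
  simp only [Nat.add_sub_cancel]
  have h2 : ∀ j ∈ range (n + 1),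
      ∑ t ∈ powersetCard j (univ.erase (Fin.last n)), bellNumber (n - t.card)
        = n.choose j * bellNumber (n - j) := by
    intro j hj
    rw [Finset.sum_congr rfl (fun t ht => by rw [(mem_powersetCard.1 ht).2]), sum_const,
      Finset.card_powersetCard, card_erase_of_mem (mem_univ _), card_univ, Fintype.card_fin,
      Nat.add_sub_cancel, smul_eq_mul]
  rw [Finset.sum_congr rfl h2, ← Finset.sum_range_reflect (fun k => n.choose k * bellNumber k)]
  refine Finset.sum_congr rfl fun j hj => ?_
  rw [mem_range] at hj
  have hj' : j ≤ n := by omega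
  rw [Nat.add_sub_cancel, Nat.choose_symm hj']


lemma bell_zero : bellNumber 0 = 1 := by
  rw [bellNumber, Fintype.card_eq_one_iff]
  have h : (⊥ : Finset (Fin 0)) = (univ : Finset (Fin 0)) := by simp
  refine ⟨(Finpartition.empty (Finset (Fin 0))).copy h, fun P => ?_⟩
  ext1
  have h2 : P.parts = ∅ := by rw [Finpartition.parts_eq_empty_iff]; exact h.symm
  simp [Finpartition.copy, Finpartition.empty, h2]

noncomputable def L (p : ℝ[X]) : ℝ := ∑ k ∈ p.support, p.coeff k * (bellNumber k : ℝ)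

lemma L_eq {p : ℝ[X]} {t : Finset ℕ} (h : p.support ⊆ t) :
    L p = ∑ k ∈ t, p.coeff k * (bellNumber k : ℝ) :=
  Finset.sum_subset h (fun k _ hk => by rw [Polynomial.notMem_support_iff.1 hk, zero_mul])

lemma L_add (p q : ℝ[X]) : L (p + q) = L p + L q := by
  rw [L_eq (Polynomial.support_add (p := p) (q := q)),
    L_eq (Finset.subset_union_left (s₁ := p.support) (s₂ := q.support)),
    L_eq (Finset.subset_union_right (s₁ := p.support) (s₂ := q.support)),
    ← Finset.sum_add_distrib]
  exact Finset.sum_congr rfl fun k _ => by rw [Polynomial.coeff_add]; ring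

lemma L_C_mul (a : ℝ) (p : ℝ[X]) : L (C a * p) = a * L p := by
  have hsub : (C a * p).support ⊆ p.support := fun k hk => by
    rw [Polynomial.mem_support_iff] at hk ⊢
    intro h; exact hk (by rw [Polynomial.coeff_C_mul, h, mul_zero])
  rw [L_eq hsub, L, Finset.mul_sum]
  exact Finset.sum_congr rfl fun k _ => by rw [Polynomial.coeff_C_mul]; ring

lemma L_monomial (n : ℕ) (a : ℝ) : L (monomial n a) = a * (bellNumber n : ℝ) := by
  rw [L_eq (Polynomial.support_monomial' n a), Finset.sum_singleton, Polynomial.coeff_monomial]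
  simp

lemma L_X_add_one_pow (n : ℕ) : L ((X + 1) ^ n) = (bellNumber (n + 1) : ℝ) := by
  have hdeg : ((X + 1 : ℝ[X]) ^ n).natDegree ≤ n := by
    refine le_trans (Polynomial.natDegree_pow_le) ?_
    have : (X + 1 : ℝ[X]).natDegree ≤ 1 := by
      rw [show (1 : ℝ[X]) = C 1 from (Polynomial.C_1).symm]
      exact le_of_eq (Polynomial.natDegree_X_add_C 1)
    calc n * (X + 1 : ℝ[X]).natDegree ≤ n * 1 := Nat.mul_le_mul_left n this
      _ = n := mul_one n
  have hsub : ((X + 1 : ℝ[X]) ^ n).support ⊆ range (n + 1) :=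
    fun k hk => mem_range.2 (by
      have := Polynomial.supp_subset_range_natDegree_succ hk
      rw [mem_range] at this; omega)
  rw [L_eq hsub, bell_rec]
  push_cast
  exact Finset.sum_congr rfl fun k _ => by rw [Polynomial.coeff_X_add_one_pow]

lemma L_X_mul (p : ℝ[X]) : L (X * p) = L (p.comp (X + 1)) := by
  induction p using Polynomial.induction_on' with
  | add p q hp hq => rw [mul_add, L_add, hp, hq, Polynomial.add_comp, L_add]
  | monomial n a =>
    rw [Polynomial.X_mul_monomial, L_monomial, Polynomial.monomial_comp, L_C_mul,
      L_X_add_one_pow]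

lemma L_desc (i : ℕ) : L (descPochhammer ℝ i) = 1 := by
  induction i with
  | zero =>
    rw [descPochhammer_zero, show (1 : ℝ[X]) = monomial 0 1 from (Polynomial.monomial_zero_one).symm,
      L_monomial, bell_zero]
    norm_num
  | succ m ih =>
    rw [descPochhammer_succ_left, L_X_mul, Polynomial.comp_assoc,
      show ((X - 1 : ℝ[X]).comp (X + 1)) = X by simp, Polynomial.comp_X, ih]


end BellAux

/-- All factorial moments `a_{(i)} = ∑_{k=0}^{i} s(i,k) a_k` of the sequence `(a_i)` are equal
to `1` (for `i ≥ 1`) if and only if `a_i` is the `i`-th Bell number for every `i ≥ 1`.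
Here `s(i,k)` are the signed Stirling numbers of the first kind, i.e. the coefficients of the
falling-factorial polynomial `x(x−1)⋯(x−i+1)`. -/
theorem factorial_moments_all_one_iff_bell (a : ℕ → ℝ) (ha0 : a 0 = 1)
    (afact : ℕ → ℝ)
    (hafact : ∀ i, 1 ≤ i →
      afact i = ∑ k ∈ Finset.range (i + 1), (descPochhammer ℝ i).coeff k * a k) :
    (∀ i, 1 ≤ i → afact i = 1) ↔ (∀ i, 1 ≤ i → a i = (bellNumber i : ℝ)) := by
  classical
  have hB0 : (bellNumber 0 : ℝ) = 1 := by rw [BellAux.bell_zero]; norm_num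
  have hBell : ∀ i : ℕ,
      ∑ k ∈ range (i + 1), (descPochhammer ℝ i).coeff k * (bellNumber k : ℝ) = 1 := by
    intro i
    have hd : (descPochhammer ℝ i).natDegree = i := descPochhammer_natDegree ℝ i
    have hsub : (descPochhammer ℝ i).support ⊆ range (i + 1) := fun k hk => by
      have h2 := Polynomial.supp_subset_range_natDegree_succ hk
      rwa [hd] at h2
    rw [← BellAux.L_eq hsub, BellAux.L_desc]
  constructor
  · intro h
    have key : ∀ i, a i = (bellNumber i : ℝ) := by
      intro i
      induction i using Nat.strong_induction_on with
      | _ i ih =>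
        match i, ih with
        | 0, _ => rw [ha0, hB0]
        | (m + 1), ih =>
          have h1 : ∑ k ∈ range (m + 2), (descPochhammer ℝ (m + 1)).coeff k * a k = 1 := by
            rw [← hafact (m + 1) (by omega)]; exact h (m + 1) (by omega)
          have h2 := hBell (m + 1)
          rw [Finset.sum_range_succ] at h1 h2
          have hcoeff : (descPochhammer ℝ (m + 1)).coeff (m + 1) = 1 := by
            have hd : (descPochhammer ℝ (m + 1)).natDegree = m + 1 :=
              descPochhammer_natDegree ℝ (m + 1)
            have hc := (monic_descPochhammer ℝ (m + 1)).coeff_natDegree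
            rwa [hd] at hc
          have hsum : ∑ k ∈ range (m + 1), (descPochhammer ℝ (m + 1)).coeff k * a k
              = ∑ k ∈ range (m + 1), (descPochhammer ℝ (m + 1)).coeff k * (bellNumber k : ℝ) :=
            Finset.sum_congr rfl fun k hk => by
              rw [ih k (by rw [mem_range] at hk; omega)]
          rw [hcoeff, one_mul] at h1 h2
          rw [hsum] at h1
          linarith
    exact fun i _ => key i
  · intro h i hi
    have hc : ∀ k ∈ range (i + 1), (descPochhammer ℝ i).coeff k * a k
        = (descPochhammer ℝ i).coeff k * (bellNumber k : ℝ) := by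
      intro k hk
      rcases Nat.eq_zero_or_pos k with rfl | hk1
      · rw [ha0, hB0]
      · rw [h k hk1]
    rw [hafact i hi, Finset.sum_congr rfl hc, hBell]
end

section
/- Let a : ℕ → ℝ be a sequence with a_0 = 1, and define the complete Bell (partition) polynomials of a by 𝒴_0 = 1 and 𝒴_i = ∑_{λ ⊢ i} d_λ a_λ for i ≥ 1. Then for every i ≥ 1 the recurrence 𝒴_i = ∑_{k=0}^{i−1} binom(i−1,k) a_{k+1} 𝒴_{i−1−k} holds. -/
open Finset

/-- Erase one part equal to `m` from a partition of `i`, giving a partition of `i - m`. -/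
noncomputable def erasePart {i : ℕ} (lam : Nat.Partition i) (m : ℕ) : Nat.Partition (i - m) :=
  if h : m ∈ lam.parts then
    { parts := lam.parts.erase m
      parts_pos := fun hp => lam.parts_pos (Multiset.mem_of_mem_erase hp)
      parts_sum := by
        have h1 := congrArg Multiset.sum (Multiset.cons_erase h)
        rw [Multiset.sum_cons, lam.parts_sum] at h1
        omega }
  else
    { parts := Multiset.replicate (i - m) 1
      parts_pos := fun hp => by simp [Multiset.eq_of_mem_replicate hp]
      parts_sum := by simp }

lemma erasePart_parts {i : ℕ} (lam : Nat.Partition i) {m : ℕ} (h : m ∈ lam.parts) :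
    (erasePart lam m).parts = lam.parts.erase m := by
  simp [erasePart, h]

/-- Insert a part `m` into a partition of `i - m`, giving a partition of `i`. -/
def insertPart {i : ℕ} (m : ℕ) (hm0 : 0 < m) (hmi : m ≤ i) (μ : Nat.Partition (i - m)) :
    Nat.Partition i where
  parts := m ::ₘ μ.parts
  parts_pos := fun hp => by
    rcases Multiset.mem_cons.mp hp with h | h
    · omega
    · exact μ.parts_pos h
  parts_sum := by rw [Multiset.sum_cons, μ.parts_sum]; omega

lemma nsmul_singleton_sum (n m : ℕ) : (n • ({m} : Multiset ℕ)).sum = n * m := by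
  induction n with
  | zero => simp
  | succ k ih => rw [succ_nsmul, Multiset.sum_add, ih]; simp; ring

lemma sum_toFinset_count_mul (s : Multiset ℕ) :
    ∑ m ∈ s.toFinset, s.count m * m = s.sum := by
  have h := congrArg Multiset.sum (Multiset.toFinset_sum_count_nsmul_eq s)
  rw [Multiset.sum_sum] at h
  simpa [nsmul_singleton_sum] using h

lemma prod_count_erase (s : Multiset ℕ) {m : ℕ} (hm : m ∈ s) :
    (∏ j ∈ (s.erase m).toFinset, Nat.factorial ((s.erase m).count j)) * s.count m
      = ∏ j ∈ s.toFinset, Nat.factorial (s.count j) := by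
  have hm' : m ∈ s.toFinset := Multiset.mem_toFinset.mpr hm
  have hr : 1 ≤ s.count m := Multiset.one_le_count_iff_mem.mpr hm
  by_cases h1 : s.count m = 1
  · -- m disappears from the erase
    have hnot : m ∉ s.erase m := by
      rw [← Multiset.count_pos, Multiset.count_erase_self]; omega
    have hts : (s.erase m).toFinset = s.toFinset.erase m := by
      ext j
      simp only [Multiset.mem_toFinset, Finset.mem_erase]
      constructor
      · intro hj
        refine ⟨fun hjm => hnot (hjm ▸ hj), Multiset.mem_of_mem_erase hj⟩
      · rintro ⟨hjm, hjs⟩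
        rw [← Multiset.count_pos, Multiset.count_erase_of_ne hjm]
        exact Multiset.count_pos.mpr hjs
    rw [hts, h1, mul_one]
    rw [← Finset.mul_prod_erase s.toFinset _ hm', h1]
    simp only [Nat.factorial_one, one_mul]
    exact Finset.prod_congr rfl fun j hj =>
      congrArg Nat.factorial (Multiset.count_erase_of_ne (Finset.mem_erase.mp hj).1 s)
  · -- m still present
    have hr2 : 2 ≤ s.count m := by omega
    have hmem : m ∈ s.erase m := by
      rw [← Multiset.count_pos, Multiset.count_erase_self]; omega
    have hts : (s.erase m).toFinset = s.toFinset := by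
      ext j
      simp only [Multiset.mem_toFinset]
      constructor
      · exact Multiset.mem_of_mem_erase
      · intro hj
        rcases eq_or_ne j m with rfl | hne
        · exact hmem
        · rw [← Multiset.count_pos, Multiset.count_erase_of_ne hne]
          exact Multiset.count_pos.mpr hj
    rw [hts]
    rw [← Finset.mul_prod_erase s.toFinset (fun j => Nat.factorial ((s.erase m).count j)) hm']
    rw [← Finset.mul_prod_erase s.toFinset (fun j => Nat.factorial (s.count j)) hm']
    have hco : ∀ j ∈ s.toFinset.erase m,
        Nat.factorial ((s.erase m).count j) = Nat.factorial (s.count j) := fun j hj =>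
      congrArg Nat.factorial (Multiset.count_erase_of_ne (Finset.mem_erase.mp hj).1 s)
    rw [Finset.prod_congr rfl hco, Multiset.count_erase_self]
    rw [← Nat.mul_factorial_pred (n := s.count m) (by omega)]
    ring

lemma factorial_choose_key {i m : ℕ} (hm1 : 1 ≤ m) (hmi : m ≤ i) :
    (i - 1).choose (m - 1) * Nat.factorial (i - m) * Nat.factorial m * i
      = m * Nat.factorial i := by
  have h1 : m - 1 ≤ i - 1 := by omega
  have h2 := Nat.choose_mul_factorial_mul_factorial h1
  have h3 : i - 1 - (m - 1) = i - m := by omega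
  rw [h3] at h2
  have h4 : Nat.factorial m = m * Nat.factorial (m - 1) := (Nat.mul_factorial_pred (by omega)).symm
  have h5 : Nat.factorial i = i * Nat.factorial (i - 1) := (Nat.mul_factorial_pred (by omega)).symm
  calc (i - 1).choose (m - 1) * Nat.factorial (i - m) * Nat.factorial m * i
      = (m * i) * ((i - 1).choose (m - 1) * Nat.factorial (m - 1) * Nat.factorial (i - m)) := by
        rw [h4]; ring
    _ = m * Nat.factorial i := by rw [h2, h5]; ring

lemma dcoef_erase {i : ℕ} (hi : 1 ≤ i) (lam : Nat.Partition i) {m : ℕ} (hm : m ∈ lam.parts) :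
    ((i - 1).choose (m - 1) : ℝ) * dcoef (erasePart lam m)
      = (m : ℝ) * (lam.parts.count m : ℝ) * dcoef lam / i := by
  have hm1 : 1 ≤ m := lam.parts_pos hm
  have hmi : m ≤ i := by
    have := Multiset.single_le_sum (fun x _ => Nat.zero_le x) m hm
    rwa [lam.parts_sum] at this
  set s := lam.parts with hs
  set Pf : ℝ := (s.map fun p => (Nat.factorial p : ℝ)).prod with hPf
  set Pr : ℝ := ∏ j ∈ s.toFinset, (Nat.factorial (s.count j) : ℝ) with hPr
  set Pfe : ℝ := ((s.erase m).map fun p => (Nat.factorial p : ℝ)).prod with hPfe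
  set Pre : ℝ := ∏ j ∈ (s.erase m).toFinset, (Nat.factorial ((s.erase m).count j) : ℝ) with hPre
  have hPf_pos : 0 < Pf := Multiset.prod_pos (by
    intro x hx
    rcases Multiset.mem_map.mp hx with ⟨p, _, rfl⟩
    exact_mod_cast Nat.factorial_pos p)
  have hPfe_pos : 0 < Pfe := Multiset.prod_pos (by
    intro x hx
    rcases Multiset.mem_map.mp hx with ⟨p, _, rfl⟩
    exact_mod_cast Nat.factorial_pos p)
  have hPr_pos : 0 < Pr := Finset.prod_pos fun j _ => by exact_mod_cast Nat.factorial_pos _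
  have hPre_pos : 0 < Pre := Finset.prod_pos fun j _ => by exact_mod_cast Nat.factorial_pos _
  have hfPf : (Nat.factorial m : ℝ) * Pfe = Pf :=
    Multiset.prod_map_erase (f := fun p => (Nat.factorial p : ℝ)) hm
  have hfPr : Pre * (s.count m : ℝ) = Pr := by
    rw [hPre, hPr]
    exact_mod_cast prod_count_erase s hm
  have hkey : ((i - 1).choose (m - 1) * Nat.factorial (i - m) * Nat.factorial m * i : ℝ)
      = (m : ℝ) * Nat.factorial i := by exact_mod_cast factorial_choose_key hm1 hmi
  have hcount_pos : (0 : ℝ) < (s.count m : ℝ) := by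
    exact_mod_cast Multiset.count_pos.mpr hm
  have hi_pos : (0 : ℝ) < (i : ℝ) := by exact_mod_cast hi
  unfold dcoef
  rw [erasePart_parts lam hm]
  rw [← hs, ← hPf, ← hPr, ← hPfe, ← hPre]
  rw [← hfPf, ← hfPr]
  field_simp
  ring_nf
  linear_combination hkey

/-- The complete Bell polynomials `𝒴_i = ∑_{λ ⊢ i} d_λ a_λ` (with `𝒴_0 = 1`) satisfy the
recurrence `𝒴_i = ∑_{k=0}^{i−1} binom(i−1,k) a_{k+1} 𝒴_{i−1−k}` for `i ≥ 1`. -/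
theorem completeBell_recurrence (a : ℕ → ℝ) (ha0 : a 0 = 1)
    (Y : ℕ → ℝ) (hY0 : Y 0 = 1)
    (hY : ∀ i, 1 ≤ i → Y i = ∑ lam : Nat.Partition i, dcoef lam * (lam.parts.map a).prod)
    (i : ℕ) (hi : 1 ≤ i) :
    Y i = ∑ k ∈ Finset.range i, ((i - 1).choose k : ℝ) * a (k + 1) * Y (i - 1 - k) := by
  set B : ∀ n : ℕ, ℝ := fun n => ∑ lam : Nat.Partition n, dcoef lam * (lam.parts.map a).prod
    with hB
  have hB0 : B 0 = 1 := by
    show (∑ lam : Nat.Partition 0, dcoef lam * (lam.parts.map a).prod) = 1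
    rw [Fintype.sum_unique]
    simp [dcoef]
  have hYB : ∀ n, Y n = B n := by
    intro n
    rcases Nat.eq_zero_or_pos n with rfl | hn
    · rw [hY0, hB0]
    · exact hY n hn
  -- the bijection step, for each k < i
  have step : ∀ k, k < i →
      B (i - (k + 1)) = ∑ lam : Nat.Partition i,
        (if (k + 1) ∈ lam.parts then
          dcoef (erasePart lam (k + 1)) * (((erasePart lam (k + 1)).parts).map a).prod else 0) := by
    intro k hk
    rw [← Finset.sum_filter]
    show (∑ lam : Nat.Partition (i - (k + 1)), dcoef lam * (lam.parts.map a).prod) = _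
    refine Finset.sum_nbij' (i := fun μ => insertPart (k + 1) (by omega) (by omega) μ)
      (j := fun lam => erasePart lam (k + 1)) ?_ ?_ ?_ ?_ ?_
    · intro μ _
      simp only [Finset.mem_filter, Finset.mem_univ, true_and]
      exact Multiset.mem_cons_self _ _
    · intro lam _; exact Finset.mem_univ _
    · intro μ _
      apply Nat.Partition.ext
      rw [erasePart_parts _ (Multiset.mem_cons_self _ _)]
      exact Multiset.erase_cons_head _ _
    · intro lam hlam
      have hmem : (k + 1) ∈ lam.parts := (Finset.mem_filter.mp hlam).2
      apply Nat.Partition.ext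
      show (k + 1) ::ₘ (erasePart lam (k + 1)).parts = lam.parts
      rw [erasePart_parts _ hmem]
      exact Multiset.cons_erase hmem
    · intro μ _
      have key : erasePart (insertPart (k + 1) (by omega) (by omega) μ) (k + 1) = μ := by
        apply Nat.Partition.ext
        rw [erasePart_parts _ (Multiset.mem_cons_self _ _)]
        exact Multiset.erase_cons_head _ _
      rw [key]
  -- reindexing range i ↔ distinct parts of lam
  have reindex : ∀ (lam : Nat.Partition i) (F : ℕ → ℝ),
      (∑ k ∈ Finset.range i, if (k + 1) ∈ lam.parts then F (k + 1) else 0)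
        = ∑ m ∈ lam.parts.toFinset, F m := by
    intro lam F
    rw [Finset.sum_ite, Finset.sum_const_zero, add_zero]
    refine Finset.sum_nbij' (i := fun k => k + 1) (j := fun m => m - 1) ?_ ?_ ?_ ?_ ?_
    · intro k hk
      exact Multiset.mem_toFinset.mpr (Finset.mem_filter.mp hk).2
    · intro m hm
      have hmem : m ∈ lam.parts := Multiset.mem_toFinset.mp hm
      have hm1 : 1 ≤ m := lam.parts_pos hmem
      have hmi : m ≤ i := by
        have := Multiset.single_le_sum (fun x _ => Nat.zero_le x) m hmem
        rwa [lam.parts_sum] at this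
      refine Finset.mem_filter.mpr ⟨Finset.mem_range.mpr (by omega), ?_⟩
      rwa [Nat.sub_add_cancel hm1]
    · intro k _; omega
    · intro m hm
      have hm1 : 1 ≤ m := lam.parts_pos (Multiset.mem_toFinset.mp hm)
      omega
    · intro k _; rfl
  -- per-partition identity
  have per_lam : ∀ lam : Nat.Partition i,
      (∑ m ∈ lam.parts.toFinset,
        ((i - 1).choose (m - 1) : ℝ) * a m *
          (dcoef (erasePart lam m) * (((erasePart lam m).parts).map a).prod))
        = dcoef lam * (lam.parts.map a).prod := by
    intro lam
    have hterm : ∀ m ∈ lam.parts.toFinset,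
        ((i - 1).choose (m - 1) : ℝ) * a m *
          (dcoef (erasePart lam m) * (((erasePart lam m).parts).map a).prod)
          = ((m : ℝ) * (lam.parts.count m : ℝ) / i) * (dcoef lam * (lam.parts.map a).prod) := by
      intro m hm
      have hmem : m ∈ lam.parts := Multiset.mem_toFinset.mp hm
      have h1 := dcoef_erase hi lam hmem
      have h2 : a m * (((erasePart lam m).parts).map a).prod = (lam.parts.map a).prod := by
        rw [erasePart_parts _ hmem]
        exact Multiset.prod_map_erase hmem
      calc ((i - 1).choose (m - 1) : ℝ) * a m *
            (dcoef (erasePart lam m) * (((erasePart lam m).parts).map a).prod)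
          = (((i - 1).choose (m - 1) : ℝ) * dcoef (erasePart lam m)) *
            (a m * (((erasePart lam m).parts).map a).prod) := by ring
        _ = ((m : ℝ) * (lam.parts.count m : ℝ) * dcoef lam / i) * (lam.parts.map a).prod := by
            rw [h1, h2]
        _ = ((m : ℝ) * (lam.parts.count m : ℝ) / i) * (dcoef lam * (lam.parts.map a).prod) := by
            ring
    rw [Finset.sum_congr rfl hterm, ← Finset.sum_mul]
    have hsum : (∑ m ∈ lam.parts.toFinset, (m : ℝ) * (lam.parts.count m : ℝ) / i) = 1 := by
      rw [← Finset.sum_div]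
      have : (∑ m ∈ lam.parts.toFinset, (m : ℝ) * (lam.parts.count m : ℝ)) = (i : ℝ) := by
        have h := sum_toFinset_count_mul lam.parts
        rw [lam.parts_sum] at h
        push_cast [← h]
        exact Finset.sum_congr rfl fun m _ => by ring
      rw [this, div_self (show (i : ℝ) ≠ 0 from Nat.cast_ne_zero.mpr (by omega))]
    rw [hsum, one_mul]
  -- put everything together
  rw [hYB i]
  show (∑ lam : Nat.Partition i, dcoef lam * (lam.parts.map a).prod) = _
  have hRHS : ∀ k ∈ Finset.range i,
      ((i - 1).choose k : ℝ) * a (k + 1) * Y (i - 1 - k)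
        = ∑ lam : Nat.Partition i,
          (if (k + 1) ∈ lam.parts then
            ((i - 1).choose k : ℝ) * a (k + 1) *
              (dcoef (erasePart lam (k + 1)) * (((erasePart lam (k + 1)).parts).map a).prod)
          else 0) := by
    intro k hk
    have hk' : k < i := Finset.mem_range.mp hk
    have : i - 1 - k = i - (k + 1) := by omega
    rw [this, hYB, step k hk', Finset.mul_sum]
    exact Finset.sum_congr rfl fun lam _ => by
      by_cases h : (k + 1) ∈ lam.parts <;> simp [h, mul_assoc]
  rw [Finset.sum_congr rfl hRHS, Finset.sum_comm]
  refine (Finset.sum_congr rfl fun lam _ => ?_).symm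
  rw [← per_lam lam]
  exact reindex lam (fun m => ((i - 1).choose (m - 1) : ℝ) * a m *
      (dcoef (erasePart lam m) * (((erasePart lam m).parts).map a).prod))
end

section
/- Let m ∈ ℝ and s > 0, and let X be a Gaussian random variable with mean m and variance s². Then for every nonnegative integer i, E[X^i] = ∑_{k=0}^{⌊i/2⌋} (s²/2)^k · ((i)_{2k}/k!) · m^{i−2k}, where (i)_{2k} = i(i−1)⋯(i−2k+1) is the falling factorial. -/
open MeasureTheory ProbabilityTheory Finset Real

private lemma nat_descFactorial_id (i k : ℕ) (h : 2*k ≤ i) :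
    (i+2).descFactorial (2*k+2)
      = (i+1).descFactorial (2*k+2) + (2*k+2) * ((i+1) * i.descFactorial (2*k)) := by
  have h1 : (i+2).descFactorial (2*k+2) = (i+2) * ((i+1) * i.descFactorial (2*k)) := by
    rw [show 2*k+2 = (2*k+1)+1 from rfl, Nat.succ_descFactorial_succ,
      Nat.succ_descFactorial_succ]
  have h2 : (i+1).descFactorial (2*k+2) = (i - 2*k) * ((i+1) * i.descFactorial (2*k)) := by
    rw [show 2*k+2 = (2*k+1)+1 from rfl, Nat.descFactorial_succ,
      Nat.succ_descFactorial_succ]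
    congr 1
    omega
  rw [h1, h2, ← add_mul]
  congr 1
  omega

private lemma gauss_term_id (v m : ℝ) (i k : ℕ) (hki : 2*k ≤ i) :
    (v/2)^(k+1) * (((i+2).descFactorial (2*(k+1)) : ℝ)/((k+1).factorial : ℝ)) * m^(i+2-2*(k+1))
      = m * ((v/2)^(k+1) * (((i+1).descFactorial (2*(k+1)) : ℝ)/((k+1).factorial : ℝ))
          * m^(i+1-2*(k+1)))
        + v*((i:ℝ)+1) * ((v/2)^k * ((i.descFactorial (2*k) : ℝ)/((k.factorial) : ℝ)) * m^(i-2*k)) := by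
  have hfac : ((k+1).factorial : ℝ) = (k+1) * (k.factorial : ℝ) := by
    rw [Nat.factorial_succ]; push_cast; ring
  have hfk : ((k.factorial : ℝ)) ≠ 0 := Nat.cast_ne_zero.mpr (Nat.factorial_ne_zero k)
  have hkk : ((k:ℝ)+1) ≠ 0 := by positivity
  have hid := nat_descFactorial_id i k hki
  have e1 : i + 2 - 2*(k+1) = i - 2*k := by omega
  rcases Nat.lt_or_ge (2*k) i with hlt | hge
  · -- 2k+1 ≤ i
    have e2 : i + 1 - 2*(k+1) = i - 2*k - 1 := by omega
    have e3 : m^(i - 2*k) = m^(i - 2*k - 1) * m := by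
      rw [← pow_succ]
      congr 1
      omega
    rw [e1, e2, e3, show 2*(k+1) = 2*k+2 from rfl, hid, hfac]
    push_cast
    field_simp
    ring
  · -- 2k = i
    have e4 : 2*k = i := le_antisymm hki hge
    have hz2 : (i+1).descFactorial (2*k+2) = 0 := by
      apply Nat.descFactorial_eq_zero_iff_lt.mpr
      omega
    rw [e1, show 2*(k+1) = 2*k+2 from rfl, hid, hz2, hfac,
      show i - 2*k = 0 from by omega, show i + 1 - (2*k+2) = 0 from by omega]
    push_cast
    field_simp
    ring

private lemma gauss_sum_ext (v m : ℝ) (j N : ℕ) (hN : j/2 + 1 ≤ N) :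
    ∑ k ∈ range N, (v/2)^k * ((j.descFactorial (2*k) : ℝ)/((k.factorial) : ℝ)) * m^(j-2*k)
      = ∑ k ∈ range (j/2+1), (v/2)^k * ((j.descFactorial (2*k) : ℝ)/((k.factorial) : ℝ)) * m^(j-2*k) := by
  refine (Finset.sum_subset (Finset.range_subset_range.mpr hN) fun k _ hk => ?_).symm
  have hk' : j < 2*k := by
    have := Finset.mem_range.not.mp hk
    omega
  rw [Nat.descFactorial_eq_zero_iff_lt.mpr hk']
  simp

private lemma gauss_sum_rec (v m : ℝ) (i : ℕ) :
    (∑ k ∈ range ((i+2)/2+1), (v/2)^k * (((i+2).descFactorial (2*k) : ℝ)/((k.factorial) : ℝ)) * m^(i+2-2*k))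
      = m * (∑ k ∈ range ((i+1)/2+1), (v/2)^k * (((i+1).descFactorial (2*k) : ℝ)/((k.factorial) : ℝ)) * m^(i+1-2*k))
        + v*((i:ℝ)+1) * ∑ k ∈ range (i/2+1), (v/2)^k * ((i.descFactorial (2*k) : ℝ)/((k.factorial) : ℝ)) * m^(i-2*k) := by
  rw [← gauss_sum_ext v m (i+1) (i/2+1+1) (by omega), show (i+2)/2+1 = i/2+1+1 from by omega,
    Finset.sum_range_succ', Finset.sum_range_succ' (n := i/2+1)]
  have e : ∑ k ∈ range (i/2+1),
        (v/2)^(k+1) * (((i+2).descFactorial (2*(k+1)) : ℝ)/(((k+1).factorial) : ℝ)) * m^(i+2-2*(k+1))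
      = m * (∑ k ∈ range (i/2+1),
          (v/2)^(k+1) * (((i+1).descFactorial (2*(k+1)) : ℝ)/(((k+1).factorial) : ℝ)) * m^(i+1-2*(k+1)))
        + v*((i:ℝ)+1) * ∑ k ∈ range (i/2+1),
            (v/2)^k * ((i.descFactorial (2*k) : ℝ)/((k.factorial) : ℝ)) * m^(i-2*k) := by
    rw [Finset.mul_sum, Finset.mul_sum, ← Finset.sum_add_distrib]
    refine Finset.sum_congr rfl fun k hk => ?_
    exact gauss_term_id v m i k (by have := Finset.mem_range.mp hk; omega)
  rw [e]
  simp [Nat.descFactorial]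
  ring

private lemma gauss_xfer (m s : ℝ) (hs : 0 < s) (f : ℝ → ℝ) :
    ∫ x : ℝ, f x ∂(gaussianReal m ⟨s ^ 2, sq_nonneg s⟩)
      = (Real.sqrt (2 * π * s ^ 2))⁻¹ * ∫ x : ℝ, f x * rexp (-(x - m) ^ 2 / (2 * s ^ 2)) := by
  have hv : (⟨s ^ 2, sq_nonneg s⟩ : NNReal) ≠ 0 := by
    simp [← NNReal.coe_ne_zero]
    positivity
  rw [gaussianReal_of_var_ne_zero m hv]
  have hmeas : Measurable fun x => (gaussianPDFReal m ⟨s ^ 2, sq_nonneg s⟩ x).toNNReal :=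
    (measurable_gaussianPDFReal _ _).real_toNNReal
  rw [show gaussianPDF m ⟨s ^ 2, sq_nonneg s⟩
      = fun x => ((gaussianPDFReal m ⟨s ^ 2, sq_nonneg s⟩ x).toNNReal : ENNReal) from rfl]
  rw [integral_withDensity_eq_integral_smul hmeas]
  rw [← integral_const_mul]
  congr 1 with x
  rw [NNReal.smul_def]
  erw [Real.coe_toNNReal _ (gaussianPDFReal_nonneg _ _ _)]
  simp only [gaussianPDFReal, smul_eq_mul]
  erw [NNReal.coe_mk]
  ring

private lemma gauss_int_pow (s : ℝ) (hs : 0 < s) (j : ℕ) :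
    Integrable (fun y : ℝ => y ^ j * rexp (-y ^ 2 / (2 * s ^ 2))) := by
  have hb : (0:ℝ) < (2 * s ^ 2)⁻¹ := by positivity
  have h := integrable_rpow_mul_exp_neg_mul_sq hb (s := (j:ℝ))
    (by exact_mod_cast neg_one_lt_zero.trans_le (Nat.cast_nonneg j))
  refine h.congr ?_
  filter_upwards with y
  rw [Real.rpow_natCast]
  congr 1
  field_simp

private lemma gauss_int_pow' (m s : ℝ) (hs : 0 < s) (j : ℕ) :
    Integrable (fun x : ℝ => x ^ j * rexp (-(x - m) ^ 2 / (2 * s ^ 2))) := by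
  have h : Integrable (fun y : ℝ => (y + m) ^ j * rexp (-y ^ 2 / (2 * s ^ 2))) := by
    have : (fun y : ℝ => (y + m) ^ j * rexp (-y ^ 2 / (2 * s ^ 2)))
        = fun y => ∑ k ∈ Finset.range (j + 1),
            (m ^ (j - k) * (j.choose k : ℝ)) • (y ^ k * rexp (-y ^ 2 / (2 * s ^ 2))) := by
      funext y
      rw [add_pow, Finset.sum_mul]
      refine Finset.sum_congr rfl fun k _ => ?_
      simp [smul_eq_mul]; ring
    rw [this]
    exact integrable_finset_sum _ fun k _ =>
      ((gauss_int_pow s hs k).smul (m ^ (j - k) * (j.choose k : ℝ))).congr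
        (by filter_upwards with y; simp)
  have h2 := h.comp_sub_right m
  refine h2.congr ?_
  filter_upwards with x
  simp

private lemma gauss_deriv (m s : ℝ) (hs : 0 < s) (x : ℝ) :
    HasDerivAt (fun x : ℝ => rexp (-(x - m) ^ 2 / (2 * s ^ 2)))
      (rexp (-(x - m) ^ 2 / (2 * s ^ 2)) * (-(x - m) / s ^ 2)) x := by
  have h1 : HasDerivAt (fun x : ℝ => x - m) 1 x := (hasDerivAt_id x).sub_const m
  have h2 : HasDerivAt (fun x : ℝ => -(x - m) ^ 2 / (2 * s ^ 2)) (-(x - m) / s ^ 2) x := by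
    have := ((h1.pow 2).neg).div_const (2 * s ^ 2)
    refine this.congr_deriv ?_
    field_simp
    ring
  exact h2.exp

private lemma gauss_ibp (m s : ℝ) (hs : 0 < s) (j : ℕ) :
    ∫ x : ℝ, x ^ (j + 2) * rexp (-(x - m) ^ 2 / (2 * s ^ 2))
      = m * (∫ x : ℝ, x ^ (j + 1) * rexp (-(x - m) ^ 2 / (2 * s ^ 2)))
        + s ^ 2 * ((j:ℝ) + 1) * ∫ x : ℝ, x ^ j * rexp (-(x - m) ^ 2 / (2 * s ^ 2)) := by
  set g : ℝ → ℝ := fun x => rexp (-(x - m) ^ 2 / (2 * s ^ 2)) with hg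
  have hI : ∀ n : ℕ, Integrable (fun x : ℝ => x ^ n * g x) := fun n => gauss_int_pow' m s hs n
  have hu : ∀ x : ℝ, HasDerivAt (fun x : ℝ => x ^ (j + 1)) (((j:ℝ) + 1) * x ^ j) x := by
    intro x; simpa using hasDerivAt_pow (j + 1) x
  have hv : ∀ x : ℝ, HasDerivAt g (g x * (-(x - m) / s ^ 2)) x := fun x => gauss_deriv m s hs x
  have huv' : Integrable ((fun x : ℝ => x ^ (j + 1)) * fun x => g x * (-(x - m) / s ^ 2)) := by
    refine (((hI (j + 2)).smul (-(s ^ 2)⁻¹)).add ((hI (j + 1)).smul (m / s ^ 2))).congr ?_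
    filter_upwards with x
    simp only [Pi.add_apply, Pi.smul_apply, smul_eq_mul, Pi.mul_apply]
    field_simp
    ring
  have hu'v : Integrable ((fun x : ℝ => ((j:ℝ) + 1) * x ^ j) * g) := by
    refine ((hI j).smul ((j:ℝ) + 1)).congr ?_
    filter_upwards with x
    simp only [Pi.smul_apply, smul_eq_mul, Pi.mul_apply]
    ring
  have huv : Integrable ((fun x : ℝ => x ^ (j + 1)) * g) := (hI (j + 1)).congr (by
    filter_upwards with x; simp [Pi.mul_apply])
  have key := integral_mul_deriv_eq_deriv_mul_of_integrable (fun x _ => hu x) (fun x _ => hv x) huv' hu'v huv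
  have e1 : ∫ x : ℝ, x ^ (j + 1) * (g x * (-(x - m) / s ^ 2))
      = -(s ^ 2)⁻¹ * (∫ x : ℝ, x ^ (j + 2) * g x) + (m / s ^ 2) * ∫ x : ℝ, x ^ (j + 1) * g x := by
    rw [← integral_const_mul, ← integral_const_mul, ← integral_add ((hI (j+2)).const_mul _)
      ((hI (j+1)).const_mul _)]
    congr 1 with x
    field_simp
    ring
  have e2 : ∫ x : ℝ, (((j:ℝ) + 1) * x ^ j) * g x = ((j:ℝ) + 1) * ∫ x : ℝ, x ^ j * g x := by
    rw [← integral_const_mul]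
    congr 1 with x
    ring
  rw [e1, e2] at key
  have hs2 : s ^ 2 ≠ 0 := by positivity
  field_simp at key
  refine mul_right_cancel₀ hs2 ?_
  linear_combination (-s ^ 2) * key

private lemma gauss_ibp0 (m s : ℝ) (hs : 0 < s) :
    ∫ x : ℝ, x ^ 1 * rexp (-(x - m) ^ 2 / (2 * s ^ 2))
      = m * ∫ x : ℝ, x ^ 0 * rexp (-(x - m) ^ 2 / (2 * s ^ 2)) := by
  set g : ℝ → ℝ := fun x => rexp (-(x - m) ^ 2 / (2 * s ^ 2)) with hg
  have hI : ∀ n : ℕ, Integrable (fun x : ℝ => x ^ n * g x) := fun n => gauss_int_pow' m s hs n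
  have hu : ∀ x : ℝ, HasDerivAt (fun _ : ℝ => (1:ℝ)) 0 x := fun x => hasDerivAt_const x 1
  have hv : ∀ x : ℝ, HasDerivAt g (g x * (-(x - m) / s ^ 2)) x := fun x => gauss_deriv m s hs x
  have huv' : Integrable ((fun _ : ℝ => (1:ℝ)) * fun x => g x * (-(x - m) / s ^ 2)) := by
    refine (((hI 1).smul (-(s ^ 2)⁻¹)).add ((hI 0).smul (m / s ^ 2))).congr ?_
    filter_upwards with x
    simp only [Pi.add_apply, Pi.smul_apply, smul_eq_mul, Pi.mul_apply]
    field_simp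
    ring
  have hu'v : Integrable ((fun _ : ℝ => (0:ℝ)) * g) := by
    refine (integrable_zero _ _ _).congr ?_
    filter_upwards with x
    simp [Pi.mul_apply]
  have huv : Integrable ((fun _ : ℝ => (1:ℝ)) * g) := (hI 0).congr (by
    filter_upwards with x; simp [Pi.mul_apply])
  have key := integral_mul_deriv_eq_deriv_mul_of_integrable (fun x _ => hu x) (fun x _ => hv x) huv' hu'v huv
  have e1 : ∫ x : ℝ, 1 * (g x * (-(x - m) / s ^ 2))
      = -(s ^ 2)⁻¹ * (∫ x : ℝ, x ^ 1 * g x) + (m / s ^ 2) * ∫ x : ℝ, x ^ 0 * g x := by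
    rw [← integral_const_mul, ← integral_const_mul, ← integral_add ((hI 1).const_mul _)
      ((hI 0).const_mul _)]
    congr 1 with x
    field_simp
    ring
  have e2 : ∫ x : ℝ, (0:ℝ) * g x = 0 := by simp
  rw [e1, e2] at key
  simp only [pow_one, pow_zero, one_mul] at key ⊢
  have hs2 : s ^ 2 ≠ 0 := by positivity
  field_simp at key
  refine mul_right_cancel₀ hs2 ?_
  linear_combination (-s ^ 2) * key

/-- Moments of a Gaussian random variable with mean `m` and variance `s²`:
`E[X^i] = ∑_{k=0}^{⌊i/2⌋} (s²/2)^k ((i)_{2k}/k!) m^{i−2k}`. -/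
theorem gaussian_moments (m s : ℝ) (hs : 0 < s) (i : ℕ) :
    ∫ x : ℝ, x ^ i ∂(gaussianReal m ⟨s ^ 2, sq_nonneg s⟩)
      = ∑ k ∈ Finset.range (i / 2 + 1),
          (s ^ 2 / 2) ^ k * ((i.descFactorial (2 * k) : ℝ) / (k.factorial : ℝ)) * m ^ (i - 2 * k) := by
  set c : ℝ := (Real.sqrt (2 * π * s ^ 2))⁻¹ with hc
  set J : ℕ → ℝ := fun j => ∫ x : ℝ, x ^ j * rexp (-(x - m) ^ 2 / (2 * s ^ 2)) with hJ
  have hx : ∀ j : ℕ, (∫ x : ℝ, x ^ j ∂(gaussianReal m ⟨s ^ 2, sq_nonneg s⟩)) = c * J j :=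
    fun j => gauss_xfer m s hs (fun x => x ^ j)
  set R : ℕ → ℝ := fun j => ∑ k ∈ Finset.range (j / 2 + 1),
      (s ^ 2 / 2) ^ k * ((j.descFactorial (2 * k) : ℝ) / (k.factorial : ℝ)) * m ^ (j - 2 * k)
    with hR
  suffices H : ∀ j : ℕ, (∫ x : ℝ, x ^ j ∂(gaussianReal m ⟨s ^ 2, sq_nonneg s⟩)) = R j from H i
  have h0 : (∫ x : ℝ, x ^ 0 ∂(gaussianReal m ⟨s ^ 2, sq_nonneg s⟩)) = 1 := by
    have : IsProbabilityMeasure (gaussianReal m ⟨s ^ 2, sq_nonneg s⟩) :=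
      instIsProbabilityMeasureGaussianReal m _
    simp
  have h1 : (∫ x : ℝ, x ^ 1 ∂(gaussianReal m ⟨s ^ 2, sq_nonneg s⟩)) = m := by
    rw [hx 1, show J 1 = m * J 0 from gauss_ibp0 m s hs, ← mul_assoc, mul_comm c m, mul_assoc,
      ← hx 0, h0, mul_one]
  have hstep : ∀ n : ℕ,
      (∫ x : ℝ, x ^ n ∂(gaussianReal m ⟨s ^ 2, sq_nonneg s⟩)) = R n →
      (∫ x : ℝ, x ^ (n+1) ∂(gaussianReal m ⟨s ^ 2, sq_nonneg s⟩)) = R (n+1) →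
      (∫ x : ℝ, x ^ (n+2) ∂(gaussianReal m ⟨s ^ 2, sq_nonneg s⟩)) = R (n+2) := by
    intro n ihn ihn1
    have h2 : J (n+2) = m * J (n+1) + s ^ 2 * ((n:ℝ) + 1) * J n := gauss_ibp m s hs n
    have : (∫ x : ℝ, x ^ (n+2) ∂(gaussianReal m ⟨s ^ 2, sq_nonneg s⟩))
        = m * (c * J (n+1)) + s ^ 2 * ((n:ℝ) + 1) * (c * J n) := by
      rw [hx (n+2), h2]
      ring
    rw [this, ← hx (n+1), ← hx n, ihn, ihn1]
    exact (gauss_sum_rec (s ^ 2) m n).symm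
  have key : ∀ j : ℕ,
      (∫ x : ℝ, x ^ j ∂(gaussianReal m ⟨s ^ 2, sq_nonneg s⟩)) = R j ∧
      (∫ x : ℝ, x ^ (j+1) ∂(gaussianReal m ⟨s ^ 2, sq_nonneg s⟩)) = R (j+1) := by
    intro j
    induction j with
    | zero =>
      constructor
      · rw [h0, hR]
        norm_num
      · rw [h1, hR]
        norm_num
    | succ n ih =>
      exact ⟨ih.2, hstep n ih.1 ih.2⟩
  exact fun j => (key j).1
end

section
/- In the ring of polynomials over ℝ in countably many indeterminates x_1, x_2, …, define the Kailath–Segall polynomials by P_0 = 1 and, for i ≥ 1, P_i = (1/i) ∑_{k=1}^{i} (−1)^{k+1} P_{i−k} x_k. Then for every i ≥ 1, i! · P_i = ∑_{λ = (1^{r_1},2^{r_2},…) ⊢ i} d_λ ∏_{j≥1} ((−1)^{j−1}(j−1)!\, x_j)^{r_j}; that is, i!P_i equals the i-th complete Bell polynomial evaluated at the variables ((−1)^{j−1}(j−1)! x_j)_{j≥1}. -/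
open Finset MvPolynomial

noncomputable def ksB (j : ℕ) : MvPolynomial ℕ ℝ :=
  MvPolynomial.C ((-1 : ℝ) ^ (j - 1) * ((j - 1).factorial : ℝ)) * MvPolynomial.X j

noncomputable def ksF (n : ℕ) : MvPolynomial ℕ ℝ :=
  ∑ lam : Nat.Partition n, MvPolynomial.C (dcoef lam) * (lam.parts.map ksB).prod

/-- Insert a part `k` into a partition of `n - k`. -/
def insPart {n : ℕ} (k : ℕ) (hk1 : 1 ≤ k) (hkn : k ≤ n) (mu : Nat.Partition (n - k)) :
    Nat.Partition n where
  parts := k ::ₘ mu.parts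
  parts_pos := by
    intro j hj
    rcases Multiset.mem_cons.mp hj with h | h
    · omega
    · exact mu.parts_pos h
  parts_sum := by rw [Multiset.sum_cons, mu.parts_sum]; omega

/-- Erase a part `k` from a partition of `n`. -/
def ersPart {n : ℕ} (lam : Nat.Partition n) (k : ℕ) (hk : k ∈ lam.parts) :
    Nat.Partition (n - k) where
  parts := lam.parts.erase k
  parts_pos := fun h => lam.parts_pos (Multiset.mem_of_mem_erase h)
  parts_sum := by
    have := Multiset.sum_erase hk
    rw [lam.parts_sum] at this
    omega

lemma partsA_ne_zero {n : ℕ} (lam : Nat.Partition n) :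
    ((lam.parts.map fun p => ((p.factorial : ℝ))).prod) ≠ 0 := by
  apply Multiset.prod_ne_zero
  intro h
  rcases Multiset.mem_map.mp h with ⟨p, _, hp⟩
  exact absurd hp.symm (by positivity)

lemma partsB_ne_zero {n : ℕ} (lam : Nat.Partition n) :
    (∏ j ∈ lam.parts.toFinset, ((lam.parts.count j).factorial : ℝ)) ≠ 0 := by
  apply Finset.prod_ne_zero_iff.mpr
  intro j _
  positivity

lemma part_le {n : ℕ} (lam : Nat.Partition n) {k : ℕ} (hk : k ∈ lam.parts) : k ≤ n := by
  have := Multiset.single_le_sum (fun x _ => Nat.zero_le x) k hk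
  rwa [lam.parts_sum] at this

/-- The key coefficient identity. -/
lemma dcoef_erase_s11 {n : ℕ} (lam : Nat.Partition n) (k : ℕ) (hk : k ∈ lam.parts)
    (mu : Nat.Partition (n - k)) (hmu : mu.parts = lam.parts.erase k) :
    (((n-1).factorial : ℝ) / (((n-k).factorial : ℝ) * ((k-1).factorial : ℝ))) * dcoef mu
      = dcoef lam * ((k : ℝ) * (lam.parts.count k : ℝ)) / (n : ℝ) := by
  have hk1 : 1 ≤ k := lam.parts_pos hk
  have hkn : k ≤ n := part_le lam hk
  have hn1 : 1 ≤ n := le_trans hk1 hkn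
  set r : ℕ := lam.parts.count k with hr
  have hr1 : 1 ≤ r := Multiset.one_le_count_iff_mem.mpr hk
  -- A-part relation
  have hA : ((lam.parts.map fun p => ((p.factorial : ℝ))).prod)
      = (k.factorial : ℝ) * ((mu.parts.map fun p => ((p.factorial : ℝ))).prod) := by
    rw [hmu]
    conv_lhs => rw [← Multiset.cons_erase hk]
    rw [Multiset.map_cons, Multiset.prod_cons]
  -- B-part relation
  have hcount : ∀ j : ℕ, j ≠ k → mu.parts.count j = lam.parts.count j := by
    intro j hj
    rw [hmu, Multiset.count_erase_of_ne hj]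
  have hcountk : mu.parts.count k = r - 1 := by
    rw [hmu, Multiset.count_erase_self]
  have hB : (∏ j ∈ lam.parts.toFinset, ((lam.parts.count j).factorial : ℝ))
      = (r : ℝ) * ∏ j ∈ mu.parts.toFinset, ((mu.parts.count j).factorial : ℝ) := by
    have hktf : k ∈ lam.parts.toFinset := Multiset.mem_toFinset.mpr hk
    by_cases hkm : k ∈ mu.parts
    · have htf : mu.parts.toFinset = lam.parts.toFinset := by
        ext j
        simp only [Multiset.mem_toFinset]
        constructor
        · intro h; rw [hmu] at h; exact Multiset.mem_of_mem_erase h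
        · intro h
          by_cases hjk : j = k
          · exact hjk ▸ hkm
          · rw [← Multiset.count_pos, hcount j hjk, Multiset.count_pos]; exact h
      rw [htf]
      rw [← Finset.mul_prod_erase _ _ hktf, ← Finset.mul_prod_erase _ _ hktf]
      have hrest : ∏ j ∈ lam.parts.toFinset.erase k, ((lam.parts.count j).factorial : ℝ)
          = ∏ j ∈ lam.parts.toFinset.erase k, ((mu.parts.count j).factorial : ℝ) := by
        apply Finset.prod_congr rfl
        intro j hj
        rw [hcount j (Finset.ne_of_mem_erase hj)]
      rw [hrest, hcountk]
      have : (r.factorial : ℝ) = (r : ℝ) * ((r-1).factorial : ℝ) := by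
        rw [← Nat.cast_mul, Nat.mul_factorial_pred (by omega)]
      rw [this]
      ring
    · -- here r = 1
      have hmuc : mu.parts.count k = 0 := by
        by_contra h
        exact hkm (Multiset.count_pos.mp (by omega))
      have hrone : r = 1 := by omega
      have htf : mu.parts.toFinset = lam.parts.toFinset.erase k := by
        ext j
        simp only [Multiset.mem_toFinset, Finset.mem_erase]
        constructor
        · intro h
          have hjk : j ≠ k := fun hh => hkm (hh ▸ h)
          refine ⟨hjk, ?_⟩
          rw [← Multiset.count_pos, ← hcount j hjk, Multiset.count_pos]
          exact h
        · rintro ⟨hjk, h⟩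
          rw [← Multiset.count_pos, hcount j hjk, Multiset.count_pos]
          exact h
      rw [htf, ← Finset.mul_prod_erase _ _ hktf]
      have hrest : ∏ j ∈ lam.parts.toFinset.erase k, ((lam.parts.count j).factorial : ℝ)
          = ∏ j ∈ lam.parts.toFinset.erase k, ((mu.parts.count j).factorial : ℝ) := by
        apply Finset.prod_congr rfl
        intro j hj
        rw [hcount j (Finset.ne_of_mem_erase hj)]
      rw [hrest, ← hr, hrone]
      norm_num
  -- now the arithmetic
  unfold dcoef
  rw [hA, hB]
  have e1 : (n.factorial : ℝ) = (n : ℝ) * ((n-1).factorial : ℝ) := by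
    rw [← Nat.cast_mul, Nat.mul_factorial_pred (by omega)]
  have e2 : (k.factorial : ℝ) = (k : ℝ) * ((k-1).factorial : ℝ) := by
    rw [← Nat.cast_mul, Nat.mul_factorial_pred (by omega)]
  rw [e1, e2]
  have hA' := partsA_ne_zero mu
  have hB' := partsB_ne_zero mu
  have h1 : ((n-k).factorial : ℝ) ≠ 0 := by positivity
  have h2 : ((k-1).factorial : ℝ) ≠ 0 := by positivity
  have h3 : (n : ℝ) ≠ 0 := by positivity
  have h4 : (k : ℝ) ≠ 0 := by positivity
  have h5 : (r : ℝ) ≠ 0 := by positivity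
  field_simp

lemma sum_parts_counts {n : ℕ} (lam : Nat.Partition n) :
    ∑ k ∈ lam.parts.toFinset, ((k : ℝ) * (lam.parts.count k : ℝ)) = (n : ℝ) := by
  have hnat : ∑ k ∈ lam.parts.toFinset, lam.parts.count k * k = n := by
    conv_rhs => rw [← lam.parts_sum, Finset.sum_multiset_count lam.parts]
    apply Finset.sum_congr rfl
    intro k _
    rw [smul_eq_mul]
  calc ∑ k ∈ lam.parts.toFinset, ((k : ℝ) * (lam.parts.count k : ℝ))
      = ((∑ k ∈ lam.parts.toFinset, lam.parts.count k * k : ℕ) : ℝ) := by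
        push_cast
        exact Finset.sum_congr rfl fun k _ => (mul_comm _ _)
    _ = (n : ℝ) := by rw [hnat]

lemma ksF_zero : ksF 0 = 1 := by
  unfold ksF
  rw [Fintype.sum_unique]
  simp [dcoef]

lemma ksF_rec (n : ℕ) (hn : 1 ≤ n) :
    ksF n = ∑ k ∈ Finset.Icc 1 n,
      MvPolynomial.C (((n-1).factorial : ℝ) / (((n-k).factorial : ℝ) * ((k-1).factorial : ℝ)))
        * (ksB k * ksF (n-k)) := by
  have hn0 : (n : ℝ) ≠ 0 := by positivity
  have lhs_eq : ksF n
      = ∑ x ∈ (Finset.univ : Finset (Nat.Partition n)).sigma (fun lam => lam.parts.toFinset),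
          MvPolynomial.C (dcoef x.1 * ((x.2 : ℝ) * (x.1.parts.count x.2 : ℝ)) / (n : ℝ))
            * (x.1.parts.map ksB).prod := by
    rw [Finset.sum_sigma]
    unfold ksF
    apply Finset.sum_congr rfl
    intro lam _
    have hc : dcoef lam = ∑ k ∈ lam.parts.toFinset,
        dcoef lam * ((k : ℝ) * (lam.parts.count k : ℝ)) / (n : ℝ) := by
      rw [← Finset.sum_div, ← Finset.mul_sum, sum_parts_counts]
      field_simp
    conv_lhs => rw [hc]
    rw [map_sum, Finset.sum_mul]
  have rhs_eq : (∑ k ∈ Finset.Icc 1 n,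
      MvPolynomial.C (((n-1).factorial : ℝ) / (((n-k).factorial : ℝ) * ((k-1).factorial : ℝ)))
        * (ksB k * ksF (n-k)))
      = ∑ x ∈ (Finset.Icc 1 n).sigma (fun k => (Finset.univ : Finset (Nat.Partition (n - k)))),
          MvPolynomial.C ((((n-1).factorial : ℝ) / (((n-x.1).factorial : ℝ) * ((x.1-1).factorial : ℝ)))
              * dcoef x.2)
            * ((x.1 ::ₘ x.2.parts).map ksB).prod := by
    rw [Finset.sum_sigma]
    apply Finset.sum_congr rfl
    intro k _
    unfold ksF
    rw [Finset.mul_sum, Finset.mul_sum]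
    apply Finset.sum_congr rfl
    intro mu _
    rw [Multiset.map_cons, Multiset.prod_cons, map_mul]
    ring
  rw [lhs_eq, rhs_eq]
  refine Finset.sum_bij'
    (fun x hx => (⟨x.2, ersPart x.1 x.2
      (Multiset.mem_toFinset.mp (Finset.mem_sigma.mp hx).2)⟩ : Σ k : ℕ, Nat.Partition (n - k)))
    (fun y hy => (⟨insPart y.1 (Finset.mem_Icc.mp (Finset.mem_sigma.mp hy).1).1
      (Finset.mem_Icc.mp (Finset.mem_sigma.mp hy).1).2 y.2, y.1⟩ : Σ lam : Nat.Partition n, ℕ))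
    (fun x hx => ?_) (fun y hy => ?_) (fun x hx => ?_) (fun y hy => ?_) (fun x hx => ?_)
  · -- hi
    have hk : x.2 ∈ x.1.parts := Multiset.mem_toFinset.mp (Finset.mem_sigma.mp hx).2
    exact Finset.mem_sigma.mpr ⟨Finset.mem_Icc.mpr ⟨x.1.parts_pos hk, part_le x.1 hk⟩,
      Finset.mem_univ _⟩
  · -- hj
    exact Finset.mem_sigma.mpr ⟨Finset.mem_univ _,
      Multiset.mem_toFinset.mpr (Multiset.mem_cons_self _ _)⟩
  · -- left_inv
    have hk : x.2 ∈ x.1.parts := Multiset.mem_toFinset.mp (Finset.mem_sigma.mp hx).2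
    apply Sigma.ext
    · exact Nat.Partition.ext (Multiset.cons_erase hk)
    · exact heq_of_eq rfl
  · -- right_inv
    apply Sigma.ext
    · rfl
    · exact heq_of_eq (Nat.Partition.ext (Multiset.erase_cons_head y.1 y.2.parts))
  · -- values
    have hk : x.2 ∈ x.1.parts := Multiset.mem_toFinset.mp (Finset.mem_sigma.mp hx).2
    have hdc := dcoef_erase_s11 x.1 x.2 hk (ersPart x.1 x.2 hk) rfl
    dsimp only
    rw [← hdc]
    congr 1
    show (x.1.parts.map ksB).prod = ((x.2 ::ₘ x.1.parts.erase x.2).map ksB).prod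
    rw [Multiset.cons_erase hk]

/-- The Kailath–Segall polynomials `P_0 = 1`,
`P_i = (1/i) ∑_{k=1}^{i} (−1)^{k+1} P_{i−k} x_k` satisfy
`i! · P_i = ∑_{λ ⊢ i} d_λ ∏_j ((−1)^{j−1}(j−1)! x_j)^{r_j}`, i.e. `i! P_i` is the `i`-th
complete Bell polynomial in the variables `(−1)^{j−1}(j−1)! x_j`. -/
theorem kailath_segall_as_bell (P : ℕ → MvPolynomial ℕ ℝ) (hP0 : P 0 = 1)
    (hP : ∀ i, 1 ≤ i → P i = MvPolynomial.C ((i : ℝ)⁻¹) *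
      ∑ k ∈ Finset.Icc 1 i,
        MvPolynomial.C ((-1 : ℝ) ^ (k + 1)) * P (i - k) * MvPolynomial.X k)
    (i : ℕ) (hi : 1 ≤ i) :
    MvPolynomial.C ((i.factorial : ℝ)) * P i
      = ∑ lam : Nat.Partition i, MvPolynomial.C (dcoef lam) *
          (lam.parts.map (fun j =>
            MvPolynomial.C ((-1 : ℝ) ^ (j - 1) * ((j - 1).factorial : ℝ)) *
              MvPolynomial.X j)).prod := by
  have key : ∀ n : ℕ, MvPolynomial.C ((n.factorial : ℝ)) * P n = ksF n := by
    intro n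
    induction n using Nat.strong_induction_on with
    | _ n ih =>
      rcases Nat.eq_zero_or_pos n with h0 | h1
      · subst h0
        simp [hP0, ksF_zero]
      · rw [hP n h1, ksF_rec n h1, ← mul_assoc, ← map_mul, Finset.mul_sum]
        apply Finset.sum_congr rfl
        intro k hk
        obtain ⟨hk1, hkn⟩ := Finset.mem_Icc.mp hk
        have hnk : n - k < n := by omega
        have hfact : ((n-k).factorial : ℝ) ≠ 0 := by positivity
        have hPnk : P (n - k) = MvPolynomial.C (((n-k).factorial : ℝ)⁻¹) * ksF (n-k) := by
          rw [← ih _ hnk, ← mul_assoc, ← map_mul, inv_mul_cancel₀ hfact, map_one, one_mul]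
        rw [hPnk]
        unfold ksB
        have hstep : ∀ (a b c : ℝ) (u v : MvPolynomial ℕ ℝ),
            MvPolynomial.C a * (MvPolynomial.C b * (MvPolynomial.C c * u) * v)
              = MvPolynomial.C (a*b*c) * (u*v) := by
          intros a b c u v
          rw [map_mul, map_mul]
          ring
        have hstep2 : ∀ (a b : ℝ) (u v : MvPolynomial ℕ ℝ),
            MvPolynomial.C a * (MvPolynomial.C b * v * u)
              = MvPolynomial.C (a*b) * (u*v) := by
          intros a b u v
          rw [map_mul]
          ring
        rw [hstep, hstep2]
        refine congrArg (fun c => MvPolynomial.C c * (ksF (n-k) * MvPolynomial.X k)) ?_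
        have hsign : ((-1 : ℝ)) ^ (k+1) = (-1 : ℝ) ^ (k-1) := by
          rw [show k + 1 = (k-1) + 2 by omega, pow_add]
          norm_num
        have e1 : (n.factorial : ℝ) = (n : ℝ) * ((n-1).factorial : ℝ) := by
          rw [← Nat.cast_mul, Nat.mul_factorial_pred (by omega)]
        rw [hsign, e1]
        have h2 : ((k-1).factorial : ℝ) ≠ 0 := by positivity
        have h3 : (n : ℝ) ≠ 0 := by positivity
        field_simp
  exact key i
end

section
/- (Abel parametrization of free cumulants.) Let m, r : ℕ → ℝ with m_0 = r_0 = 1, and suppose the ordinary formal power series M(z) = ∑_{i≥0} m_i z^i and R(z) = ∑_{i≥0} r_i z^i satisfy M(z) = R(zM(z)) in ℝ⟦z⟧ (substitution of the series zM(z), which has zero constant term, into R); i.e., the r_i are the free cumulants of the moment sequence (m_i). Then for every i ≥ 1: i! · r_i = ∑_{λ ⊢ i} (−i)_{ν_λ−1} d_λ m̄_λ and i! · m_i = ∑_{λ ⊢ i} (i)_{ν_λ−1} d_λ r̄_λ, where m̄_λ = ∏_{j≥1} (j!\, m_j)^{r_j(λ)} and r̄_λ = ∏_{j≥1} (j!\,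 r_j)^{r_j(λ)} with r_j(λ) the multiplicity of the part j in λ. -/
open Finset PowerSeries Polynomial

/-- Composition `h(k(z))` of formal power series: the `n`-th coefficient is
`∑_m coeff_m(h) · coeff_n(k^m)` (only `m ≤ n` contribute when `k` has zero constant term). -/
noncomputable def psComp (h k : PowerSeries ℝ) : PowerSeries ℝ :=
  PowerSeries.mk fun n => ∑ m ∈ Finset.range (n + 1),
    (PowerSeries.coeff (R := ℝ) m h) * (PowerSeries.coeff (R := ℝ) n (k ^ m))

namespace FCA


noncomputable def mfac (s : Multiset ℕ) : ℝ := ∏ j ∈ s.toFinset, ((s.count j).factorial : ℝ)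

lemma mfac_pos (s : Multiset ℕ) : 0 < mfac s :=
  Finset.prod_pos fun j _ => by positivity

lemma mfac_cons (j : ℕ) (t : Multiset ℕ) : mfac (j ::ₘ t) = (t.count j + 1) * mfac t := by
  unfold mfac
  rw [Multiset.toFinset_cons]
  by_cases h : j ∈ t.toFinset
  · rw [Finset.insert_eq_self.2 h, ← Finset.mul_prod_erase _ _ h, ← Finset.mul_prod_erase _ _ h,
      Multiset.count_cons_self, Nat.factorial_succ]
    push_cast
    rw [mul_assoc]
    congr 1
    congr 1
    apply Finset.prod_congr rfl
    intro k hk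
    rw [Multiset.count_cons_of_ne (Finset.ne_of_mem_erase hk)]
  · rw [Finset.prod_insert h, Multiset.count_cons_self,
      Multiset.count_eq_zero.2 (fun hc => h (Multiset.mem_toFinset.2 hc))]
    simp only [Nat.factorial_one, Nat.cast_one, one_mul, Nat.cast_zero, zero_add]
    apply Finset.prod_congr rfl
    intro k hk
    rw [Multiset.count_cons_of_ne]
    rintro rfl; exact h hk

noncomputable def wfn (a : ℕ → ℝ) (s : Multiset ℕ) : ℝ := (s.map a).prod / mfac s

lemma wfn_cons (a : ℕ → ℝ) (j : ℕ) (t : Multiset ℕ) :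
    ((t.count j : ℝ) + 1) * wfn a (j ::ₘ t) = a j * wfn a t := by
  unfold wfn
  rw [mfac_cons, Multiset.map_cons, Multiset.prod_cons]
  have h1 : mfac t ≠ 0 := ne_of_gt (mfac_pos t)
  have h2 : ((t.count j : ℝ) + 1) ≠ 0 := by positivity
  field_simp

lemma wfn_count (a : ℕ → ℝ) (s : Multiset ℕ) (j : ℕ) (hj : j ∈ s) :
    (s.count j : ℝ) * wfn a s = a j * wfn a (s.erase j) := by
  have hc := Multiset.cons_erase hj
  have := wfn_cons a j (s.erase j)
  rw [hc] at this
  rw [← this]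
  congr 2
  have : Multiset.count j s = Multiset.count j (s.erase j) + 1 := by
    conv_lhs => rw [← hc]
    rw [Multiset.count_cons_self]
  rw [this]; push_cast; ring


noncomputable def Pp (a : ℕ → ℝ) (i : ℕ) : Polynomial ℝ :=
  ∑ lam : Nat.Partition i, Polynomial.C (wfn a lam.parts) * descPochhammer ℝ (Multiset.card lam.parts)

lemma parts_zero (lam : Nat.Partition 0) : lam.parts = 0 := by
  have h := lam.parts_sum
  rcases Multiset.empty_or_exists_mem lam.parts with h0 | ⟨x, hx⟩
  · exact h0
  · exfalso
    have hpos := lam.parts_pos hx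
    have hle : x ≤ lam.parts.sum := Multiset.single_le_sum (fun y _ => Nat.zero_le y) x hx
    omega

lemma wfn_zero (a : ℕ → ℝ) : wfn a 0 = 1 := by
  simp [wfn, mfac]

lemma Pp_zero (a : ℕ → ℝ) : Pp a 0 = 1 := by
  rw [Pp, Fintype.sum_unique]
  rw [parts_zero default, wfn_zero]
  simp

lemma card_pos_of_partition {i : ℕ} (hi : 1 ≤ i) (lam : Nat.Partition i) :
    0 < Multiset.card lam.parts := by
  rcases Multiset.empty_or_exists_mem lam.parts with h0 | hx
  · exfalso; have := lam.parts_sum; rw [h0] at this; simp at this; omega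
  · obtain ⟨x, hx⟩ := hx
    exact Multiset.card_pos.2 fun h => by simp [h] at hx

lemma Pp_eval_zero (a : ℕ → ℝ) (i : ℕ) :
    (Pp a i).eval 0 = if i = 0 then 1 else 0 := by
  rcases Nat.eq_zero_or_pos i with rfl | hi
  · simp [Pp_zero]
  · rw [if_neg (by omega), Pp, Polynomial.eval_finset_sum]
    apply Finset.sum_eq_zero
    intro lam _
    have hc := card_pos_of_partition hi lam
    rw [Polynomial.eval_mul, descPochhammer_eval_zero, if_neg (by omega)]
    ring

lemma desc_shift (k : ℕ) (x : ℝ) :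
    (descPochhammer ℝ (k+1)).eval (x+1) =
      (descPochhammer ℝ (k+1)).eval x + ((k:ℝ)+1) * (descPochhammer ℝ k).eval x := by
  have h1 : (descPochhammer ℝ (k+1)).eval (x+1) = (x+1) * (descPochhammer ℝ k).eval x := by
    rw [descPochhammer_succ_left]
    simp [Polynomial.eval_comp]
  rw [h1, descPochhammer_succ_eval]
  ring


def consP {i k : ℕ} (h : k < i) (mu : Nat.Partition k) : Nat.Partition i where
  parts := (i - k) ::ₘ mu.parts
  parts_pos := by
    intro x hx
    rcases Multiset.mem_cons.1 hx with rfl | hx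
    · omega
    · exact mu.parts_pos hx
  parts_sum := by rw [Multiset.sum_cons, mu.parts_sum]; omega

def eraseP {i : ℕ} (lam : Nat.Partition i) (j : ℕ) (hj : j ∈ lam.parts) :
    Nat.Partition (i - j) where
  parts := lam.parts.erase j
  parts_pos := fun hx => lam.parts_pos (Multiset.mem_of_mem_erase hx)
  parts_sum := by
    have hc := Multiset.cons_erase hj
    have hs := lam.parts_sum
    have : j + (lam.parts.erase j).sum = i := by
      rw [← Multiset.sum_cons, hc, hs]
    omega

lemma part_bounds {i : ℕ} (lam : Nat.Partition i) {j : ℕ} (hj : j ∈ lam.parts) :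
    1 ≤ j ∧ j ≤ i := by
  refine ⟨lam.parts_pos hj, ?_⟩
  have := Multiset.single_le_sum (fun y _ => Nat.zero_le y) j hj
  rw [lam.parts_sum] at this
  exact this

lemma sigma_ext {k k' : ℕ} (h : k = k') (mu : Nat.Partition k) (mu' : Nat.Partition k')
    (hp : mu.parts = mu'.parts) : (⟨k, mu⟩ : Σ n, Nat.Partition n) = ⟨k', mu'⟩ := by
  subst h
  exact congrArg _ (Nat.Partition.ext hp)

lemma sigma_ext2 {i : ℕ} (lam lam' : Nat.Partition i) (j j' : ℕ)
    (h : lam.parts = lam'.parts) (hj : j = j') :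
    (⟨lam, j⟩ : Σ _ : Nat.Partition i, ℕ) = ⟨lam', j'⟩ := by
  subst hj
  exact congrArg (fun l => (⟨l, j⟩ : Σ _ : Nat.Partition i, ℕ)) (Nat.Partition.ext h)

lemma PE (a : ℕ → ℝ) (ha : a 0 = 1) (i : ℕ) (x : ℝ) :
    (Pp a i).eval (x+1) = ∑ k ∈ range (i+1), (Pp a k).eval x * a (i - k) := by
  rcases Nat.eq_zero_or_pos i with rfl | hi
  · simp [Pp_zero, ha]
  have hL : (Pp a i).eval (x+1) = (Pp a i).eval x +
      ∑ lam : Nat.Partition i, wfn a lam.parts * (Multiset.card lam.parts) *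
        (descPochhammer ℝ (Multiset.card lam.parts - 1)).eval x := by
    rw [Pp, Polynomial.eval_finset_sum, Polynomial.eval_finset_sum, ← Finset.sum_add_distrib]
    apply Finset.sum_congr rfl
    intro lam _
    have hc : Multiset.card lam.parts = (Multiset.card lam.parts - 1) + 1 := by
      have := card_pos_of_partition hi lam; omega
    simp only [Polynomial.eval_mul, Polynomial.eval_C]
    rw [hc, desc_shift]
    push_cast
    ring
  have hKey : (∑ lam : Nat.Partition i, wfn a lam.parts * (Multiset.card lam.parts) *
        (descPochhammer ℝ (Multiset.card lam.parts - 1)).eval x)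
      = ∑ k ∈ range i, (Pp a k).eval x * a (i - k) := by
    have hT : ∀ lam : Nat.Partition i,
        wfn a lam.parts * (Multiset.card lam.parts) *
          (descPochhammer ℝ (Multiset.card lam.parts - 1)).eval x
        = ∑ j ∈ lam.parts.toFinset, wfn a lam.parts * (lam.parts.count j) *
            (descPochhammer ℝ (Multiset.card lam.parts - 1)).eval x := by
      intro lam
      rw [← Finset.sum_mul, ← Finset.mul_sum]
      congr 2
      rw [← Nat.cast_sum]
      congr 1
      exact (Multiset.toFinset_sum_count_eq lam.parts).symm
    rw [Finset.sum_congr rfl (fun lam _ => hT lam), Finset.sum_sigma']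
    have hR : ∀ k ∈ range i, (Pp a k).eval x * a (i - k) =
        ∑ mu : Nat.Partition k, wfn a mu.parts *
          (descPochhammer ℝ (Multiset.card mu.parts)).eval x * a (i - k) := by
      intro k _
      rw [Pp, Polynomial.eval_finset_sum, Finset.sum_mul]
      apply Finset.sum_congr rfl
      intro mu _
      rw [Polynomial.eval_mul, Polynomial.eval_C]
    rw [Finset.sum_congr rfl hR, Finset.sum_sigma']
    refine Finset.sum_bij' (fun p hp => ⟨i - p.2, eraseP p.1 p.2 ?_⟩)
      (fun q hq => ⟨consP ?_ q.2, i - q.1⟩) ?_ ?_ ?_ ?_ ?_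
    · exact Multiset.mem_toFinset.1 (Finset.mem_sigma.1 hp).2
    · exact Finset.mem_range.1 (Finset.mem_sigma.1 hq).1
    · intro p hp
      have hj := Multiset.mem_toFinset.1 (Finset.mem_sigma.1 hp).2
      obtain ⟨h1, h2⟩ := part_bounds p.1 hj
      refine Finset.mem_sigma.2 ⟨Finset.mem_range.2 ?_, Finset.mem_univ _⟩
      show i - p.2 < i
      omega
    · intro q hq
      refine Finset.mem_sigma.2 ⟨Finset.mem_univ _, Multiset.mem_toFinset.2 ?_⟩
      exact Multiset.mem_cons_self _ _
    · intro p hp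
      have hj := Multiset.mem_toFinset.1 (Finset.mem_sigma.1 hp).2
      obtain ⟨h1, h2⟩ := part_bounds p.1 hj
      obtain ⟨lam, j⟩ := p
      simp only at hj h1 h2 ⊢
      have hij : i - (i - j) = j := by omega
      apply sigma_ext2
      · simp only [consP, eraseP]
        rw [hij, Multiset.cons_erase hj]
      · exact hij
    · intro q hq
      have hk := Finset.mem_range.1 (Finset.mem_sigma.1 hq).1
      obtain ⟨k, mu⟩ := q
      simp only at hk ⊢
      apply sigma_ext
      · omega
      · simp only [eraseP, consP]
        exact Multiset.erase_cons_head _ _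
    · intro p hp
      have hj := Multiset.mem_toFinset.1 (Finset.mem_sigma.1 hp).2
      obtain ⟨h1, h2⟩ := part_bounds p.1 hj
      obtain ⟨lam, j⟩ := p
      simp only at hj h1 h2 ⊢
      have hij : i - (i - j) = j := by omega
      have hcard : Multiset.card (lam.parts.erase j) = Multiset.card lam.parts - 1 :=
        Multiset.card_erase_of_mem hj
      have hw := wfn_count a lam.parts j hj
      simp only [eraseP, hij, hcard]
      calc wfn a lam.parts * (lam.parts.count j : ℝ) *
            (descPochhammer ℝ (Multiset.card lam.parts - 1)).eval x
          = ((lam.parts.count j : ℝ) * wfn a lam.parts) *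
            (descPochhammer ℝ (Multiset.card lam.parts - 1)).eval x := by ring
        _ = (a j * wfn a (lam.parts.erase j)) *
            (descPochhammer ℝ (Multiset.card lam.parts - 1)).eval x := by rw [hw]
        _ = wfn a (lam.parts.erase j) *
            (descPochhammer ℝ (Multiset.card lam.parts - 1)).eval x * a j := by ring
  rw [hL, hKey, Finset.sum_range_succ, Nat.sub_self, ha, mul_one]
  ring

lemma CM (a : ℕ → ℝ) (ha : a 0 = 1) (N i : ℕ) :
    PowerSeries.coeff i ((mk a)^N) = (Pp a i).eval (N:ℝ) := by
  induction N generalizing i with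
  | zero =>
    rw [pow_zero, PowerSeries.coeff_one, Nat.cast_zero, Pp_eval_zero]
  | succ N ih =>
    rw [pow_succ, PowerSeries.coeff_mul, Finset.Nat.sum_antidiagonal_eq_sum_range_succ_mk]
    push_cast
    rw [PE a ha i (N:ℝ)]
    apply Finset.sum_congr rfl
    intro k hk
    rw [coeff_mk, ih]

lemma polyext {p q : Polynomial ℝ} (h : ∀ n : ℕ, p.eval (n:ℝ) = q.eval (n:ℝ)) : p = q := by
  rw [← sub_eq_zero]
  apply Polynomial.eq_zero_of_infinite_isRoot
  apply Set.infinite_of_injective_forall_mem (f := fun n : ℕ => (n : ℝ))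
  · exact fun a b hab => Nat.cast_injective hab
  · intro n
    simp only [Set.mem_setOf_eq, Polynomial.IsRoot, Polynomial.eval_sub, h n, sub_self]

lemma conv_eval (a : ℕ → ℝ) (ha : a 0 = 1) (N i : ℕ) :
    ∑ k ∈ range (i+1), (Pp a k).eval (N:ℝ) * (Pp a (i-k)).eval (-(N:ℝ)) =
      if i = 0 then 1 else 0 := by
  have hpq : (∑ k ∈ range (i+1), Polynomial.C ((Pp a k).eval (N:ℝ)) * Pp a (i-k))
      = (Pp a i).comp (Polynomial.X + Polynomial.C (N:ℝ)) := by
    apply polyext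
    intro y
    rw [Polynomial.eval_finset_sum, Polynomial.eval_comp]
    simp only [Polynomial.eval_mul, Polynomial.eval_C, Polynomial.eval_add, Polynomial.eval_X]
    have h1 : ∀ k ∈ range (i+1), (Pp a k).eval (N:ℝ) * (Pp a (i-k)).eval (y:ℝ)
        = PowerSeries.coeff k ((mk a)^N) * PowerSeries.coeff (i-k) ((mk a)^y) := by
      intro k _
      rw [CM a ha, CM a ha]
    have h2 : PowerSeries.coeff i ((mk a)^N * (mk a)^y) =
        ∑ x ∈ range (i+1), PowerSeries.coeff x ((mk a)^N) * PowerSeries.coeff (i-x) ((mk a)^y) := by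
      rw [PowerSeries.coeff_mul, Finset.Nat.sum_antidiagonal_eq_sum_range_succ_mk]
    rw [Finset.sum_congr rfl h1, ← h2, ← pow_add, CM a ha]
    push_cast
    ring_nf
  have := congrArg (Polynomial.eval (-(N:ℝ))) hpq
  rw [Polynomial.eval_finset_sum, Polynomial.eval_comp] at this
  simp only [Polynomial.eval_mul, Polynomial.eval_C, Polynomial.eval_add, Polynomial.eval_X] at this
  rw [this, neg_add_cancel, Pp_eval_zero]

lemma CMinv (a : ℕ → ℝ) (ha : a 0 = 1) (N i : ℕ) :
    PowerSeries.coeff i (((mk a)⁻¹)^N) = (Pp a i).eval (-(N:ℝ)) := by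
  have hc : PowerSeries.constantCoeff (mk a) ≠ 0 := by
    rw [← coeff_zero_eq_constantCoeff, coeff_mk, ha]; norm_num
  have hQ : (mk a)^N * PowerSeries.mk (fun n => (Pp a n).eval (-(N:ℝ))) = 1 := by
    ext n
    rw [PowerSeries.coeff_mul, Finset.Nat.sum_antidiagonal_eq_sum_range_succ_mk]
    have h1 : ∀ k ∈ range (n+1), PowerSeries.coeff k ((mk a)^N) *
        PowerSeries.coeff (n-k) (PowerSeries.mk (fun j => (Pp a j).eval (-(N:ℝ))))
        = (Pp a k).eval (N:ℝ) * (Pp a (n-k)).eval (-(N:ℝ)) := by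
      intro k _
      rw [CM a ha, coeff_mk]
    rw [Finset.sum_congr rfl h1, conv_eval a ha, PowerSeries.coeff_one]
  have hpow : ((mk a)⁻¹)^N * ((mk a)^N) = 1 := by
    rw [← mul_pow, mul_comm, PowerSeries.mul_inv_cancel _ hc, one_pow]
  have : ((mk a)⁻¹)^N = PowerSeries.mk (fun n => (Pp a n).eval (-(N:ℝ))) := by
    calc ((mk a)⁻¹)^N = ((mk a)⁻¹)^N * ((mk a)^N *
          PowerSeries.mk (fun n => (Pp a n).eval (-(N:ℝ)))) := by rw [hQ, mul_one]
      _ = (((mk a)⁻¹)^N * (mk a)^N) *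
          PowerSeries.mk (fun n => (Pp a n).eval (-(N:ℝ))) := by ring
      _ = PowerSeries.mk (fun n => (Pp a n).eval (-(N:ℝ))) := by rw [hpow, one_mul]
  rw [this, coeff_mk]


variable (g : PowerSeries ℝ)

lemma coeff_XgPow_of_lt {a mm : ℕ} (h : a < mm) :
    PowerSeries.coeff a ((PowerSeries.X * g) ^ mm) = 0 := by
  rw [mul_pow, PowerSeries.coeff_X_pow_mul', if_neg (by omega)]

lemma coeff_eval₂ (P : Polynomial ℝ) (n : ℕ) :
    PowerSeries.coeff n (Polynomial.eval₂ (PowerSeries.C) (PowerSeries.X * g) P) =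
      ∑ mm ∈ range (n+1), P.coeff mm * PowerSeries.coeff n ((PowerSeries.X * g) ^ mm) := by
  rw [Polynomial.eval₂_eq_sum, Polynomial.sum_def, map_sum]
  have h1 : ∀ e ∈ P.support,
      PowerSeries.coeff n (PowerSeries.C (P.coeff e) * (PowerSeries.X * g) ^ e)
      = P.coeff e * PowerSeries.coeff n ((PowerSeries.X * g) ^ e) := fun e _ =>
    PowerSeries.coeff_C_mul _ _ _
  rw [Finset.sum_congr rfl h1]
  have h2 : (∑ e ∈ P.support, P.coeff e * PowerSeries.coeff n ((PowerSeries.X * g) ^ e))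
      = ∑ e ∈ P.support ∪ range (n+1), P.coeff e * PowerSeries.coeff n ((PowerSeries.X * g) ^ e) := by
    apply Finset.sum_subset Finset.subset_union_left
    intro e _ he
    rw [Polynomial.notMem_support_iff.1 he, zero_mul]
  have h3 : (∑ e ∈ range (n+1), P.coeff e * PowerSeries.coeff n ((PowerSeries.X * g) ^ e))
      = ∑ e ∈ P.support ∪ range (n+1), P.coeff e * PowerSeries.coeff n ((PowerSeries.X * g) ^ e) := by
    apply Finset.sum_subset Finset.subset_union_right
    intro e _ he
    rw [coeff_XgPow_of_lt g (by simpa using he), mul_zero]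
  rw [h2, h3]

lemma coeff_psComp_eval₂ (F : PowerSeries ℝ) {n j : ℕ} (hj : n < j) :
    PowerSeries.coeff n (psComp F (PowerSeries.X * g)) =
      PowerSeries.coeff n
        (Polynomial.eval₂ (PowerSeries.C) (PowerSeries.X * g) (trunc j F)) := by
  rw [psComp, coeff_mk, coeff_eval₂]
  apply Finset.sum_congr rfl
  intro mm hmm
  rw [coeff_trunc, if_pos (by simp at hmm; omega)]

lemma psComp_mul (F G : PowerSeries ℝ) :
    psComp (F * G) (PowerSeries.X * g) =
      psComp F (PowerSeries.X * g) * psComp G (PowerSeries.X * g) := by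
  ext n
  rw [coeff_psComp_eval₂ g (F * G) (Nat.lt_succ_self n)]
  have key : PowerSeries.coeff n
        (Polynomial.eval₂ (PowerSeries.C) (PowerSeries.X * g) (trunc (n+1) (F * G)))
      = PowerSeries.coeff n
        (Polynomial.eval₂ (PowerSeries.C) (PowerSeries.X * g)
          (trunc (n+1) F * trunc (n+1) G)) := by
    rw [coeff_eval₂, coeff_eval₂]
    apply Finset.sum_congr rfl
    intro mm hmm
    simp only [Finset.mem_range] at hmm
    congr 1
    rw [coeff_trunc, if_pos hmm, PowerSeries.coeff_mul, Polynomial.coeff_mul]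
    apply Finset.sum_congr rfl
    intro p hp
    rw [Finset.HasAntidiagonal.mem_antidiagonal] at hp
    rw [coeff_trunc, coeff_trunc, if_pos (by omega), if_pos (by omega)]
  rw [key, Polynomial.eval₂_mul, PowerSeries.coeff_mul, PowerSeries.coeff_mul]
  apply Finset.sum_congr rfl
  intro p hp
  rw [Finset.HasAntidiagonal.mem_antidiagonal] at hp
  rw [coeff_psComp_eval₂ g F (show p.1 < n+1 by omega),
    coeff_psComp_eval₂ g G (show p.2 < n+1 by omega)]

lemma psComp_one : psComp 1 (PowerSeries.X * g) = 1 := by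
  ext n
  rw [psComp, coeff_mk]
  rw [Finset.sum_eq_single 0]
  · simp
  · intro b _ hb
    rw [PowerSeries.coeff_one, if_neg hb, zero_mul]
  · intro h; simp at h

lemma psComp_pow (F : PowerSeries ℝ) (k : ℕ) :
    psComp (F ^ k) (PowerSeries.X * g) = (psComp F (PowerSeries.X * g)) ^ k := by
  induction k with
  | zero => simpa using psComp_one g
  | succ k ih => rw [pow_succ, pow_succ, psComp_mul, ih]



variable {M : ℝ⟦X⟧}

lemma subL (hM : PowerSeries.constantCoeff M ≠ 0) (N k : ℕ) (hk : k ≤ N) :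
    PowerSeries.coeff N ((PowerSeries.X * M)^k * (d⁄dX ℝ (PowerSeries.X * M)) * (M⁻¹)^(N+1))
      = if k = N then 1 else 0 := by
  have hMi : M * M⁻¹ = 1 := PowerSeries.mul_inv_cancel M hM
  have hDW : d⁄dX ℝ (PowerSeries.X * M) = M + PowerSeries.X * (d⁄dX ℝ M) := by
    rw [Derivation.leibniz, smul_eq_mul, smul_eq_mul, PowerSeries.derivative_X, mul_one, add_comm]
  have hsplit : (PowerSeries.X * M)^k * (d⁄dX ℝ (PowerSeries.X * M)) * (M⁻¹)^(N+1)
      = PowerSeries.X^k * (M^(k+1) * (M⁻¹)^(N+1))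
        + PowerSeries.X^(k+1) * (M^k * (d⁄dX ℝ M) * (M⁻¹)^(N+1)) := by
    rw [hDW, mul_pow]; ring
  rw [hsplit, map_add, PowerSeries.coeff_X_pow_mul', PowerSeries.coeff_X_pow_mul',
    if_pos hk]
  rcases eq_or_lt_of_le hk with rfl | hkN
  · rw [if_pos (rfl : k = k), if_neg (show ¬ k + 1 ≤ k by omega), Nat.sub_self]
    have h1 : M^(k+1) * (M⁻¹)^(k+1) = 1 := by rw [← mul_pow, hMi, one_pow]
    rw [h1, add_zero, PowerSeries.coeff_zero_eq_constantCoeff, map_one]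
  · rw [if_neg (show ¬ k = N by omega), if_pos (show k + 1 ≤ N by omega)]
    set j := N - k with hj
    have hj1 : 1 ≤ j := by omega
    have hNk1 : N - (k+1) = j - 1 := by omega
    rw [hNk1]
    -- derivative identity
    set G := M^(k+1) * (M⁻¹)^(N+1) with hG
    set T := M^k * (d⁄dX ℝ M) * (M⁻¹)^(N+1) with hT
    have hdG : d⁄dX ℝ G = ((k:ℕ)+1) • T - ((N:ℕ)+1) • T := by
      rw [hG, Derivation.leibniz, Derivation.leibniz_pow, Derivation.leibniz_pow,
        PowerSeries.derivative_inv']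
      have e1 : M^(k+1) • ((N+1) • (M⁻¹)^(N+1-1) • (-(M⁻¹)^2 * d⁄dX ℝ M))
          = -(((N:ℕ)+1) • T) := by
        rw [hT]
        simp only [smul_eq_mul, Nat.add_sub_cancel]
        have e2 : M^(k+1) * (((N+1) : ℕ) • ((M⁻¹)^N * (-(M⁻¹)^2 * d⁄dX ℝ M)))
            = -((((N:ℕ)+1)) • (M^(k+1) * (M⁻¹)^(N+2) * d⁄dX ℝ M)) := by
          rw [nsmul_eq_mul, nsmul_eq_mul]; ring
        rw [e2]
        congr 1
        rw [nsmul_eq_mul, nsmul_eq_mul]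
        have e3 : M^(k+1) * (M⁻¹)^(N+2) = M^k * (M⁻¹)^(N+1) := by
          have : M^(k+1) * (M⁻¹)^(N+2) = (M * M⁻¹) * (M^k * (M⁻¹)^(N+1)) := by ring
          rw [this, hMi, one_mul]
        rw [e3]; ring
      rw [e1, hT]
      simp only [smul_eq_mul, Nat.add_sub_cancel, nsmul_eq_mul]
      push_cast
      ring
    have hco : PowerSeries.coeff (j-1) (d⁄dX ℝ G) = (j:ℝ) * PowerSeries.coeff j G := by
      have hj' : j - 1 + 1 = j := by omega
      rw [PowerSeries.coeff_derivative, hj', mul_comm]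
      congr 1
      rw [Nat.cast_sub hj1]
      push_cast
      ring
    have hco2 : PowerSeries.coeff (j-1) (d⁄dX ℝ G)
        = ((k:ℝ)+1) * PowerSeries.coeff (j-1) T - ((N:ℝ)+1) * PowerSeries.coeff (j-1) T := by
      rw [hdG, map_sub, map_nsmul, map_nsmul, nsmul_eq_mul, nsmul_eq_mul]
      push_cast
      ring
    have hjR : ((N:ℝ)+1) - ((k:ℝ)+1) = (j:ℝ) := by
      rw [hj]; push_cast [Nat.cast_sub (le_of_lt hkN)]; ring
    have : (j:ℝ) * PowerSeries.coeff j G = -((j:ℝ) * PowerSeries.coeff (j-1) T) := by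
      rw [← hco, hco2]; linear_combination (-(PowerSeries.coeff (j-1) T)) * hjR
    have hjne : (j:ℝ) ≠ 0 := by positivity
    have hfin : PowerSeries.coeff j G = -PowerSeries.coeff (j-1) T := by
      apply mul_left_cancel₀ hjne
      rw [this]; ring
    rw [hfin]; ring


variable {M : ℝ⟦X⟧}

lemma LC (hM : PowerSeries.constantCoeff M ≠ 0) (F : ℝ⟦X⟧) (N : ℕ) :
    PowerSeries.coeff N (psComp F (PowerSeries.X * M) * (d⁄dX ℝ (PowerSeries.X * M)) *
      (M⁻¹)^(N+1)) = PowerSeries.coeff N F := by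
  set W := PowerSeries.X * M with hW
  set B := (d⁄dX ℝ W) * (M⁻¹)^(N+1) with hB
  rw [mul_assoc, ← hB, PowerSeries.coeff_mul]
  have h1 : ∀ p ∈ antidiagonal N,
      PowerSeries.coeff p.1 (psComp F W) * PowerSeries.coeff p.2 B
      = ∑ mm ∈ range (N+1),
          PowerSeries.coeff mm F * PowerSeries.coeff p.1 (W^mm) *
            PowerSeries.coeff p.2 B := by
    intro p hp
    rw [Finset.HasAntidiagonal.mem_antidiagonal] at hp
    rw [psComp, coeff_mk, Finset.sum_mul]
    apply Finset.sum_subset (Finset.range_subset_range.2 (by omega))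
    intro mm _ hmm
    rw [Finset.mem_range, not_lt] at hmm
    rw [hW, coeff_XgPow_of_lt M (by omega), mul_zero, zero_mul]
  rw [Finset.sum_congr rfl h1, Finset.sum_comm]
  have h2 : ∀ mm ∈ range (N+1),
      (∑ p ∈ antidiagonal N, PowerSeries.coeff mm F * PowerSeries.coeff p.1 (W^mm) *
        PowerSeries.coeff p.2 B)
      = PowerSeries.coeff mm F * (if mm = N then 1 else 0) := by
    intro mm hmm
    rw [Finset.mem_range] at hmm
    have e1 : ∀ p ∈ antidiagonal N,
        PowerSeries.coeff mm F * PowerSeries.coeff p.1 (W^mm) * PowerSeries.coeff p.2 B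
        = PowerSeries.coeff mm F *
            (PowerSeries.coeff p.1 (W^mm) * PowerSeries.coeff p.2 B) := by
      intro p _; ring
    rw [Finset.sum_congr rfl e1, ← Finset.mul_sum, ← PowerSeries.coeff_mul, ← mul_assoc,
      subL hM N mm (by omega)]
  rw [Finset.sum_congr rfl h2, Finset.sum_eq_single N]
  · rw [if_pos rfl, mul_one]
  · intro b _ hb; rw [if_neg hb, mul_zero]
  · intro h; simp at h

variable {m r : ℕ → ℝ}

lemma EA (hm0 : m 0 = 1)
    (hR : PowerSeries.mk m = psComp (PowerSeries.mk r) (PowerSeries.X * PowerSeries.mk m))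
    (i : ℕ) :
    PowerSeries.coeff i ((PowerSeries.mk r)^(i+1)) = ((i:ℝ)+1) * m i := by
  have hM : PowerSeries.constantCoeff (PowerSeries.mk m) ≠ 0 := by
    rw [← PowerSeries.coeff_zero_eq_constantCoeff, coeff_mk, hm0]; norm_num
  have h := LC hM ((PowerSeries.mk r)^(i+1)) i
  rw [psComp_pow, ← hR] at h
  have h1 : (PowerSeries.mk m)^(i+1) * ((PowerSeries.mk m)⁻¹)^(i+1) = 1 := by
    rw [← mul_pow, PowerSeries.mul_inv_cancel _ hM, one_pow]
  have e : (PowerSeries.mk m)^(i+1) * (d⁄dX ℝ (PowerSeries.X * PowerSeries.mk m)) *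
      ((PowerSeries.mk m)⁻¹)^(i+1) = d⁄dX ℝ (PowerSeries.X * PowerSeries.mk m) := by
    calc (PowerSeries.mk m)^(i+1) * (d⁄dX ℝ (PowerSeries.X * PowerSeries.mk m)) *
        ((PowerSeries.mk m)⁻¹)^(i+1)
        = ((PowerSeries.mk m)^(i+1) * ((PowerSeries.mk m)⁻¹)^(i+1)) *
          (d⁄dX ℝ (PowerSeries.X * PowerSeries.mk m)) := by ring
      _ = d⁄dX ℝ (PowerSeries.X * PowerSeries.mk m) := by rw [h1, one_mul]
  rw [e] at h
  rw [← h, PowerSeries.coeff_derivative, PowerSeries.coeff_succ_X_mul, coeff_mk]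
  ring

lemma EB (hm0 : m 0 = 1)
    (hR : PowerSeries.mk m = psComp (PowerSeries.mk r) (PowerSeries.X * PowerSeries.mk m))
    (i : ℕ) (hi : 2 ≤ i) :
    ((i:ℝ)-1) * r i = - PowerSeries.coeff i (((PowerSeries.mk m)⁻¹)^(i-1)) := by
  have hM : PowerSeries.constantCoeff (PowerSeries.mk m) ≠ 0 := by
    rw [← PowerSeries.coeff_zero_eq_constantCoeff, coeff_mk, hm0]; norm_num
  set M := PowerSeries.mk m with hMdef
  have hMi : M * M⁻¹ = 1 := PowerSeries.mul_inv_cancel _ hM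
  have h := LC hM (PowerSeries.mk r) i
  rw [← hR] at h
  have hDW : d⁄dX ℝ (PowerSeries.X * M) = M + PowerSeries.X * (d⁄dX ℝ M) := by
    rw [Derivation.leibniz, smul_eq_mul, smul_eq_mul, PowerSeries.derivative_X, mul_one, add_comm]
  have hsplit : M * (d⁄dX ℝ (PowerSeries.X * M)) * (M⁻¹)^(i+1)
      = (M⁻¹)^(i-1) + PowerSeries.X * ((d⁄dX ℝ M) * (M⁻¹)^i) := by
    rw [hDW]
    have e1 : M * (M + PowerSeries.X * (d⁄dX ℝ M)) * (M⁻¹)^(i+1)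
        = (M * M⁻¹)^2 * (M⁻¹)^(i-1) +
          PowerSeries.X * ((M * M⁻¹) * ((d⁄dX ℝ M) * (M⁻¹)^i)) := by
      have h2 : i + 1 = 2 + (i - 1) := by omega
      have h3 : i + 1 = 1 + i := by omega
      have p1 : (M⁻¹ : ℝ⟦X⟧)^(i+1) = (M⁻¹)^2 * (M⁻¹)^(i-1) := by
        rw [h2, pow_add]
      have p2 : (M⁻¹ : ℝ⟦X⟧)^(i+1) = M⁻¹ * (M⁻¹)^i := by
        rw [← pow_succ']
      calc M * (M + PowerSeries.X * (d⁄dX ℝ M)) * (M⁻¹)^(i+1)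
          = M * M * (M⁻¹)^(i+1) + PowerSeries.X * (M * (d⁄dX ℝ M) * (M⁻¹)^(i+1)) := by ring
        _ = M * M * ((M⁻¹)^2 * (M⁻¹)^(i-1)) +
            PowerSeries.X * (M * (d⁄dX ℝ M) * (M⁻¹ * (M⁻¹)^i)) := by
            nth_rewrite 2 [p2]
            rw [p1]
        _ = (M * M⁻¹)^2 * (M⁻¹)^(i-1) +
            PowerSeries.X * ((M * M⁻¹) * ((d⁄dX ℝ M) * (M⁻¹)^i)) := by ring
    rw [e1, hMi, one_pow, one_mul, one_mul]
  rw [hsplit, map_add] at h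
  have hi1 : i = (i - 1) + 1 := by omega
  rw [hi1, PowerSeries.coeff_succ_X_mul, ← hi1] at h
  -- derivative trick for the second summand
  have hdG : d⁄dX ℝ ((M⁻¹)^(i-1)) = -(((i:ℝ) - 1)) • ((M⁻¹)^i * (d⁄dX ℝ M)) := by
    rw [Derivation.leibniz_pow, PowerSeries.derivative_inv']
    have h4 : (i - 1 : ℕ) - 1 + 2 = i := by omega
    have e2 : (i-1 : ℕ) • ((M⁻¹)^(i-1-1) • (-(M⁻¹)^2 * (d⁄dX ℝ M)))
        = -(((i:ℝ) - 1)) • ((M⁻¹)^(i-1-1+2) * (d⁄dX ℝ M)) := by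
      rw [nsmul_eq_mul, smul_eq_mul]
      have : ((i - 1 : ℕ) : ℝ⟦X⟧) = PowerSeries.C ((i:ℝ) - 1) := by
        rw [Nat.cast_sub (by omega)]
        push_cast
        simp [map_sub, map_one]
      rw [this, pow_add, PowerSeries.smul_eq_C_mul, map_neg]
      ring
    rw [e2, h4]
  have hco : PowerSeries.coeff (i-1) ((d⁄dX ℝ M) * (M⁻¹)^i)
      * ((i:ℝ) - 1) = -((i:ℝ) * PowerSeries.coeff i ((M⁻¹)^(i-1))) := by
    have h5 : PowerSeries.coeff (i-1) (d⁄dX ℝ ((M⁻¹)^(i-1)))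
        = PowerSeries.coeff i ((M⁻¹)^(i-1)) * (i:ℝ) := by
      rw [PowerSeries.coeff_derivative, ← hi1]
      congr 1
      rw [hi1]; push_cast; ring
    rw [hdG] at h5
    rw [map_smul, smul_eq_mul] at h5
    have : PowerSeries.coeff (i-1) ((M⁻¹)^i * (d⁄dX ℝ M))
        = PowerSeries.coeff (i-1) ((d⁄dX ℝ M) * (M⁻¹)^i) := by rw [mul_comm]
    rw [this] at h5
    linarith [h5]
  -- combine
  have hr : r i = PowerSeries.coeff i ((M⁻¹)^(i-1)) +
      PowerSeries.coeff (i-1) ((d⁄dX ℝ M) * (M⁻¹)^i) := by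
    conv_lhs => rw [← PowerSeries.coeff_mk i r]
    rw [← h]
  linear_combination ((i:ℝ) - 1) * hr + hco

lemma desc_left_eval (k : ℕ) (x : ℝ) :
    (descPochhammer ℝ (k+1)).eval x = x * (descPochhammer ℝ k).eval (x-1) := by
  rw [descPochhammer_succ_left]
  simp [Polynomial.eval_comp]


end FCA

open FCA

/-- Abel parametrization of free cumulants: if `M(z) = R(zM(z))` (the R-transform relation
defining the free cumulants `r_i` of the moments `m_i`), then
`i! r_i = ∑_{λ ⊢ i} (−i)_{ν_λ−1} d_λ m̄_λ` and `i! m_i = ∑_{λ ⊢ i} (i)_{ν_λ−1} d_λ r̄_λ`,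
where `m̄_λ = ∏_j (j! m_j)^{r_j(λ)}` and `r̄_λ = ∏_j (j! r_j)^{r_j(λ)}`. -/
theorem free_cumulants_abel_parametrization (m r : ℕ → ℝ) (hm0 : m 0 = 1) (hr0 : r 0 = 1)
    (hR : PowerSeries.mk m = psComp (PowerSeries.mk r) (PowerSeries.X * PowerSeries.mk m))
    (i : ℕ) (hi : 1 ≤ i) :
    ((i.factorial : ℝ) * r i = ∑ lam : Nat.Partition i,
        (descPochhammer ℝ (lam.parts.card - 1)).eval (-(i : ℝ)) * dcoef lam *
          (lam.parts.map (fun j => (j.factorial : ℝ) * m j)).prod) ∧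
    ((i.factorial : ℝ) * m i = ∑ lam : Nat.Partition i,
        (descPochhammer ℝ (lam.parts.card - 1)).eval ((i : ℝ)) * dcoef lam *
          (lam.parts.map (fun j => (j.factorial : ℝ) * r j)).prod) := by
  have hfac : (Nat.factorial i : ℝ) ≠ 0 := by positivity
  have TR : ∀ (a : ℕ → ℝ) (x : ℝ) (lam : Nat.Partition i),
      (descPochhammer ℝ (lam.parts.card - 1)).eval x * dcoef lam *
        (lam.parts.map (fun j => (j.factorial : ℝ) * a j)).prod
      = (i.factorial : ℝ) *
          ((descPochhammer ℝ (lam.parts.card - 1)).eval x * wfn a lam.parts) := by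
    intro a x lam
    have hP : (0:ℝ) < (lam.parts.map fun p => (p.factorial : ℝ)).prod := by
      apply Multiset.prod_pos
      intro y hy
      obtain ⟨p, hp, rfl⟩ := Multiset.mem_map.1 hy
      positivity
    have hQ := mfac_pos lam.parts
    have hsplit : (lam.parts.map (fun j => (j.factorial : ℝ) * a j)).prod
        = (lam.parts.map fun p => (p.factorial : ℝ)).prod * (lam.parts.map a).prod := by
      rw [← Multiset.prod_map_mul]
    have hQ' : mfac lam.parts = ∏ j ∈ lam.parts.toFinset,
        ((lam.parts.count j).factorial : ℝ) := rfl
    rw [hsplit, dcoef, wfn, ← hQ']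
    have h1 : (lam.parts.map fun p => (p.factorial : ℝ)).prod ≠ 0 := ne_of_gt hP
    have h2 : mfac lam.parts ≠ 0 := ne_of_gt hQ
    field_simp
  constructor
  · -- first conjunct
    rcases eq_or_lt_of_le hi with hi1 | hi2
    · -- i = 1
      subst hi1
      have hm1r1 : m 1 = r 1 := by
        have h := congrArg (PowerSeries.coeff 1) hR
        rw [coeff_mk, psComp, coeff_mk] at h
        rw [h, Finset.sum_range_succ, Finset.sum_range_succ, Finset.range_zero,
          Finset.sum_empty, pow_zero, pow_one, PowerSeries.coeff_one, if_neg one_ne_zero,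
          mul_zero, zero_add]
        have : PowerSeries.coeff 1 (PowerSeries.X * PowerSeries.mk m) = m 0 := by
          rw [show (1:ℕ) = 0 + 1 from rfl, PowerSeries.coeff_succ_X_mul, coeff_mk]
        rw [this, hm0, mul_one, coeff_mk]
        ring
      rw [Fintype.sum_unique]
      have hparts : (default : Nat.Partition 1).parts = {1} :=
        Nat.Partition.partition_one_parts _
      rw [dcoef, hparts]
      simp only [Multiset.card_singleton, Nat.sub_self, descPochhammer_zero,
        Polynomial.eval_one, Multiset.map_singleton, Multiset.prod_singleton,
        Multiset.toFinset_singleton, Finset.prod_singleton, Multiset.count_singleton,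
        if_pos rfl, Nat.factorial_one, Nat.cast_one, one_mul, mul_one]
      rw [hm1r1]
      norm_num
    · -- i ≥ 2
      have hi2' : 2 ≤ i := hi2
      have hne : (i:ℝ) - 1 ≠ 0 := by
        have : (2:ℝ) ≤ (i:ℝ) := by exact_mod_cast hi2'
        linarith
      have key1 : r i = ∑ lam : Nat.Partition i,
          (descPochhammer ℝ (lam.parts.card - 1)).eval (-(i:ℝ)) * wfn m lam.parts := by
        apply mul_left_cancel₀ hne
        rw [EB hm0 hR i hi2', CMinv m hm0 (i-1) i]
        have hcast : ((i - 1 : ℕ) : ℝ) = (i:ℝ) - 1 := by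
          rw [Nat.cast_sub (by omega)]; norm_num
        rw [hcast, Pp, Polynomial.eval_finset_sum, ← Finset.sum_neg_distrib, Finset.mul_sum]
        apply Finset.sum_congr rfl
        intro lam _
        set k := Multiset.card lam.parts - 1 with hk
        have hc : Multiset.card lam.parts = k + 1 := by
          have := card_pos_of_partition hi lam; omega
        rw [Polynomial.eval_mul, Polynomial.eval_C, hc, desc_left_eval,
          show -((i:ℝ) - 1) - 1 = -(i:ℝ) by ring]
        ring
      rw [Finset.sum_congr rfl (fun lam _ => TR m (-(i:ℝ)) lam), ← Finset.mul_sum, ← key1]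
  · -- second conjunct
    have hne : (i:ℝ) + 1 ≠ 0 := by positivity
    have key2 : m i = ∑ lam : Nat.Partition i,
        (descPochhammer ℝ (lam.parts.card - 1)).eval ((i:ℝ)) * wfn r lam.parts := by
      apply mul_left_cancel₀ hne
      rw [← EA hm0 hR i, CM r hr0 (i+1) i]
      have hcast : ((i + 1 : ℕ) : ℝ) = (i:ℝ) + 1 := by push_cast; ring
      rw [hcast, Pp, Polynomial.eval_finset_sum, Finset.mul_sum]
      apply Finset.sum_congr rfl
      intro lam _
      set k := Multiset.card lam.parts - 1 with hk
      have hc : Multiset.card lam.parts = k + 1 := by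
        have := card_pos_of_partition hi lam; omega
      rw [Polynomial.eval_mul, Polynomial.eval_C, hc, desc_left_eval,
        show (i:ℝ) + 1 - 1 = (i:ℝ) by ring]
      ring
    rw [Finset.sum_congr rfl (fun lam _ => TR r ((i:ℝ)) lam), ← Finset.mul_sum, ← key2]
end

section
/- (Abel parametrization of Boolean cumulants.) Let m, b : ℕ → ℝ with m_0 = 1 and b_0 = 0, and suppose the ordinary formal power series M(z) = ∑_{i≥0} m_i z^i and B(z) = ∑_{i≥1} b_i z^i satisfy M(z) − 1 = B(z)·M(z) in ℝ⟦z⟧; i.e., the b_i are the Boolean cumulants of the moment sequence (m_i). Then for every i ≥ 1: i! · b_i = ∑_{λ ⊢ i} (−1)^{ν_λ−1} ν_λ! d_λ m̄_λ, where m̄_λ = ∏_{j≥1} (j!\, m_j)^{r_j(λ)} with r_j(λ) the multiplicity of the part j in λ. -/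
open Finset PowerSeries

noncomputable def wfn (m : ℕ → ℝ) {i : ℕ} (lam : Nat.Partition i) : ℝ :=
  (-1 : ℝ) ^ (Multiset.card lam.parts - 1) * ((Multiset.card lam.parts).factorial : ℝ) /
    (∏ j ∈ lam.parts.toFinset, ((lam.parts.count j).factorial : ℝ)) *
    (lam.parts.map m).prod

def onesP (n : ℕ) : Nat.Partition n :=
  ⟨Multiset.replicate n 1,
   fun h => by simp [Multiset.eq_of_mem_replicate h],
   by simp [Multiset.sum_replicate]⟩

def insP (i k : ℕ) (μ : Nat.Partition (i - k)) : Nat.Partition i :=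
  if h : 0 < k ∧ k ≤ i then
    ⟨k ::ₘ μ.parts, by
      intro j hj
      rcases Multiset.mem_cons.1 hj with rfl | hj
      · exact h.1
      · exact μ.parts_pos hj, by
      rw [Multiset.sum_cons, μ.parts_sum]; omega⟩
  else onesP i

def delP (i k : ℕ) (lam : Nat.Partition i) : Nat.Partition (i - k) :=
  if h : k ∈ lam.parts then
    ⟨lam.parts.erase k,
     fun hj => lam.parts_pos (Multiset.mem_of_mem_erase hj), by
      have h2 : k + (lam.parts.erase k).sum = i := by
        rw [← Multiset.sum_cons, Multiset.cons_erase h, lam.parts_sum]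
      omega⟩
  else onesP _

lemma insP_parts {i k : ℕ} (hk : 0 < k) (hki : k ≤ i) (μ : Nat.Partition (i - k)) :
    (insP i k μ).parts = k ::ₘ μ.parts := by
  rw [insP, dif_pos ⟨hk, hki⟩]

lemma delP_parts {i k : ℕ} (lam : Nat.Partition i) (hk : k ∈ lam.parts) :
    (delP i k lam).parts = lam.parts.erase k := by
  rw [delP, dif_pos hk]

lemma delP_insP {i k : ℕ} (hk : 0 < k) (hki : k ≤ i) (μ : Nat.Partition (i - k)) :
    delP i k (insP i k μ) = μ := by
  have h1 : (insP i k μ).parts = k ::ₘ μ.parts := insP_parts hk hki μ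
  have hkmem : k ∈ (insP i k μ).parts := by rw [h1]; exact Multiset.mem_cons_self _ _
  ext1
  rw [delP_parts _ hkmem, h1, Multiset.erase_cons_head]

lemma insP_delP {i k : ℕ} (lam : Nat.Partition i) (hk : k ∈ lam.parts) (hki : k ≤ i) :
    insP i k (delP i k lam) = lam := by
  ext1
  rw [insP_parts (lam.parts_pos hk) hki, delP_parts lam hk, Multiset.cons_erase hk]

lemma Rfact (s : Multiset ℕ) (k : ℕ) (hk : k ∈ s) :
    (∏ j ∈ (s.erase k).toFinset, ((s.erase k).count j).factorial) * s.count k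
      = ∏ j ∈ s.toFinset, (s.count j).factorial := by
  have hsub : (s.erase k).toFinset ⊆ s.toFinset := by
    intro j hj
    exact Multiset.mem_toFinset.2 (Multiset.mem_of_mem_erase (Multiset.mem_toFinset.1 hj))
  have h1 : (∏ j ∈ (s.erase k).toFinset, ((s.erase k).count j).factorial)
      = ∏ j ∈ s.toFinset, ((s.erase k).count j).factorial := by
    refine Finset.prod_subset hsub ?_
    intro j _ hj
    have : j ∉ s.erase k := fun h => hj (Multiset.mem_toFinset.2 h)
    rw [← Multiset.count_eq_zero] at this
    simp [this]
  rw [h1]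
  have hkT : k ∈ s.toFinset := Multiset.mem_toFinset.2 hk
  rw [← Finset.mul_prod_erase _ _ hkT, ← Finset.mul_prod_erase _ (fun j => (s.count j).factorial) hkT]
  have h2 : ∏ j ∈ s.toFinset.erase k, ((s.erase k).count j).factorial
      = ∏ j ∈ s.toFinset.erase k, (s.count j).factorial := by
    refine Finset.prod_congr rfl ?_
    intro j hj
    rw [Multiset.count_erase_of_ne (Finset.ne_of_mem_erase hj)]
  rw [h2, Multiset.count_erase_self]
  have hc : 0 < s.count k := Multiset.count_pos.2 hk
  have h3 : (s.count k - 1).factorial * s.count k = (s.count k).factorial := by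
    rw [mul_comm]; exact Nat.mul_factorial_pred hc.ne'
  rw [mul_right_comm, h3]

noncomputable def Qs (m : ℕ → ℝ) (n : ℕ) : ℝ := ∑ lam : Nat.Partition n, wfn m lam

lemma Rpos {i : ℕ} (lam : Nat.Partition i) :
    (0:ℝ) < ∏ j ∈ lam.parts.toFinset, ((lam.parts.count j).factorial : ℝ) := by
  apply Finset.prod_pos
  intro j _
  exact_mod_cast Nat.factorial_pos _

lemma wfn_del (m : ℕ → ℝ) {i : ℕ} (lam : Nat.Partition i) {k : ℕ} (hk : k ∈ lam.parts) :
    m k * wfn m (delP i k lam) =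
      (-1:ℝ) ^ (Multiset.card lam.parts - 2) * ((Multiset.card lam.parts - 1).factorial : ℝ)
        * (lam.parts.count k : ℝ) /
        (∏ j ∈ lam.parts.toFinset, ((lam.parts.count j).factorial : ℝ)) *
        (lam.parts.map m).prod := by
  have hp := delP_parts lam hk
  have hcard : Multiset.card ((delP i k lam).parts) = Multiset.card lam.parts - 1 := by
    rw [hp, Multiset.card_erase_of_mem hk, Nat.pred_eq_sub_one]
  have hprod : m k * (((delP i k lam).parts).map m).prod = (lam.parts.map m).prod := by
    rw [hp]; exact Multiset.prod_map_erase (f := m) hk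
  have hR : (∏ j ∈ ((delP i k lam).parts).toFinset, (((delP i k lam).parts.count j).factorial : ℝ))
      * (lam.parts.count k : ℝ)
      = ∏ j ∈ lam.parts.toFinset, ((lam.parts.count j).factorial : ℝ) := by
    have := Rfact lam.parts k hk
    rw [hp]
    exact_mod_cast congrArg (fun x : ℕ => (x:ℝ)) this
  rw [wfn, hcard]
  have hcard2 : Multiset.card lam.parts - 1 - 1 = Multiset.card lam.parts - 2 := by omega
  rw [hcard2]
  have hR0 : (∏ j ∈ ((delP i k lam).parts).toFinset, (((delP i k lam).parts.count j).factorial : ℝ)) ≠ 0 := by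
    have : (0:ℝ) < ∏ j ∈ ((delP i k lam).parts).toFinset, (((delP i k lam).parts.count j).factorial : ℝ) :=
      Rpos _
    linarith
  have hR0' : (∏ j ∈ lam.parts.toFinset, ((lam.parts.count j).factorial : ℝ)) ≠ 0 := by
    have := Rpos lam; linarith
  rw [← hprod, ← hR]
  have hc0 : (lam.parts.count k : ℝ) ≠ 0 := by
    have : 0 < lam.parts.count k := Multiset.count_pos.2 hk
    positivity
  field_simp

lemma sum_del (m : ℕ → ℝ) {i : ℕ} (lam : Nat.Partition i) (hν : 2 ≤ Multiset.card lam.parts) :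
    ∑ k ∈ lam.parts.toFinset, m k * wfn m (delP i k lam) = - wfn m lam := by
  have h1 : ∀ k ∈ lam.parts.toFinset, m k * wfn m (delP i k lam) =
      (-1:ℝ) ^ (Multiset.card lam.parts - 2) * ((Multiset.card lam.parts - 1).factorial : ℝ)
        * (lam.parts.count k : ℝ) /
        (∏ j ∈ lam.parts.toFinset, ((lam.parts.count j).factorial : ℝ)) *
        (lam.parts.map m).prod := by
    intro k hk
    exact wfn_del m lam (Multiset.mem_toFinset.1 hk)
  rw [Finset.sum_congr rfl h1]
  have hsum : ∑ k ∈ lam.parts.toFinset, (lam.parts.count k : ℝ) = (Multiset.card lam.parts : ℝ) := by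
    exact_mod_cast congrArg (fun x : ℕ => (x:ℝ)) (Multiset.toFinset_sum_count_eq lam.parts)
  have hsign : (-1:ℝ) ^ (Multiset.card lam.parts - 2) = - (-1:ℝ) ^ (Multiset.card lam.parts - 1) := by
    have : Multiset.card lam.parts - 1 = (Multiset.card lam.parts - 2) + 1 := by omega
    rw [this, pow_succ]; ring
  have hfact : ((Multiset.card lam.parts - 1).factorial : ℝ) * (Multiset.card lam.parts : ℝ)
      = ((Multiset.card lam.parts).factorial : ℝ) := by
    rw [mul_comm]
    exact_mod_cast Nat.mul_factorial_pred (by omega)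
  rw [wfn]
  set R := ∏ j ∈ lam.parts.toFinset, ((lam.parts.count j).factorial : ℝ) with hRdef
  set P := ((lam.parts.map m).prod : ℝ) with hPdef
  have h2 : ∀ k ∈ lam.parts.toFinset,
      (-1:ℝ) ^ (Multiset.card lam.parts - 2) * ((Multiset.card lam.parts - 1).factorial : ℝ)
        * (lam.parts.count k : ℝ) / R * P
      = (lam.parts.count k : ℝ) *
        ((-1:ℝ) ^ (Multiset.card lam.parts - 2) * ((Multiset.card lam.parts - 1).factorial : ℝ)
          / R * P) := by
    intro k _; ring
  rw [Finset.sum_congr rfl h2, ← Finset.sum_mul, hsum, hsign, ← hfact]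
  ring

lemma hstep_sum (m : ℕ → ℝ) {i : ℕ} :
    ∑ k ∈ Finset.Ico 1 i, m k * Qs m (i - k)
      = ∑ lam : Nat.Partition i, ∑ k ∈ lam.parts.toFinset.filter (· < i),
          m k * wfn m (delP i k lam) := by
  have h1 : ∀ k ∈ Finset.Ico 1 i, m k * Qs m (i - k)
      = ∑ mu : Nat.Partition (i - k), m k * wfn m mu := by
    intro k _
    rw [Qs, Finset.mul_sum]
  rw [Finset.sum_congr rfl h1]
  rw [Finset.sum_sigma' (Finset.Ico 1 i)
      (fun k => (Finset.univ : Finset (Nat.Partition (i - k))))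
      (fun k mu => m k * wfn m mu)]
  rw [Finset.sum_sigma' (Finset.univ : Finset (Nat.Partition i))
      (fun lam => lam.parts.toFinset.filter (· < i))
      (fun lam k => m k * wfn m (delP i k lam))]
  refine Finset.sum_nbij' (fun x => ⟨insP i x.1 x.2, x.1⟩)
    (fun y => ⟨y.2, delP i y.2 y.1⟩) ?_ ?_ ?_ ?_ ?_
  · rintro ⟨k, mu⟩ hx
    simp only [Finset.mem_sigma, Finset.mem_Ico, Finset.mem_univ, and_true] at hx
    obtain ⟨hk1, hk2⟩ := hx
    dsimp only
    rw [Finset.mem_sigma]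
    refine ⟨Finset.mem_univ _, ?_⟩
    rw [Finset.mem_filter, Multiset.mem_toFinset, insP_parts (by omega) (by omega)]
    exact ⟨Multiset.mem_cons_self _ _, hk2⟩
  · rintro ⟨lam, k⟩ hy
    simp only [Finset.mem_sigma, Finset.mem_filter, Multiset.mem_toFinset, Finset.mem_univ,
      true_and, decide_eq_true_eq] at hy
    obtain ⟨hk, hki⟩ := hy
    dsimp only
    rw [Finset.mem_sigma, Finset.mem_Ico]
    exact ⟨⟨lam.parts_pos hk, hki⟩, Finset.mem_univ _⟩
  · rintro ⟨k, mu⟩ hx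
    simp only [Finset.mem_sigma, Finset.mem_Ico, Finset.mem_univ, and_true] at hx
    obtain ⟨hk1, hk2⟩ := hx
    exact congrArg (Sigma.mk k) (delP_insP (by omega) (by omega) mu)
  · rintro ⟨lam, k⟩ hy
    simp only [Finset.mem_sigma, Finset.mem_filter, Multiset.mem_toFinset, Finset.mem_univ,
      true_and, decide_eq_true_eq] at hy
    obtain ⟨hk, hki⟩ := hy
    dsimp only
    exact congrArg (fun lam' => (⟨lam', k⟩ : Σ _ : Nat.Partition i, ℕ))
      (insP_delP lam hk (by
        have := lam.parts_sum
        have hle : k ≤ lam.parts.sum :=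
          Multiset.single_le_sum (fun x _ => Nat.zero_le x) _ hk
        omega))
  · rintro ⟨k, mu⟩ hx
    simp only [Finset.mem_sigma, Finset.mem_Ico, Finset.mem_univ, and_true] at hx
    obtain ⟨hk1, hk2⟩ := hx
    dsimp only
    rw [delP_insP (by omega) (by omega) mu]

lemma comb (m : ℕ → ℝ) {i : ℕ} (hi : 1 ≤ i) :
    Qs m i + ∑ k ∈ Finset.Ico 1 i, m k * Qs m (i - k) = m i := by
  classical
  set sing : Nat.Partition i := ⟨{i}, by
      intro j hj
      rw [Multiset.mem_singleton] at hj
      omega, by simp⟩ with hsing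
  have hcase : ∀ lam : Nat.Partition i,
      wfn m lam + ∑ k ∈ lam.parts.toFinset.filter (· < i), m k * wfn m (delP i k lam)
        = if lam = sing then m i else 0 := by
    intro lam
    have hν : 1 ≤ Multiset.card lam.parts := by
      by_contra h
      have h0 : Multiset.card lam.parts = 0 := by omega
      rw [Multiset.card_eq_zero] at h0
      have := lam.parts_sum
      rw [h0] at this
      simp at this
      omega
    by_cases hc1 : Multiset.card lam.parts = 1
    · obtain ⟨a, ha⟩ := Multiset.card_eq_one.1 hc1
      have hai : a = i := by
        have := lam.parts_sum
        rw [ha] at this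
        simpa using this
      subst hai
      have hls : lam = sing := by
        ext1
        rw [ha, hsing]
      rw [if_pos hls]
      have hfilter : lam.parts.toFinset.filter (· < a) = ∅ := by
        rw [ha]
        ext j
        simp only [Multiset.toFinset_singleton, Finset.mem_filter, Finset.mem_singleton,
          Finset.notMem_empty, iff_false]
        rintro ⟨rfl, h2⟩
        omega
      rw [hfilter, Finset.sum_empty, add_zero, wfn, ha]
      simp
    · have hν2 : 2 ≤ Multiset.card lam.parts := by omega
      have hlt : ∀ k ∈ lam.parts, k < i := by
        intro k hk
        have hcons := Multiset.cons_erase hk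
        have hcard : Multiset.card (lam.parts.erase k) = Multiset.card lam.parts - 1 :=
          by rw [Multiset.card_erase_of_mem hk, Nat.pred_eq_sub_one]
        have hne : (lam.parts.erase k) ≠ 0 := by
          intro h0
          rw [h0] at hcard
          simp at hcard
          omega
        obtain ⟨l, hl⟩ := Multiset.exists_mem_of_ne_zero hne
        have hlpos : 0 < l := lam.parts_pos (Multiset.mem_of_mem_erase hl)
        have hlsum : l ≤ (lam.parts.erase k).sum :=
          Multiset.single_le_sum (fun x _ => Nat.zero_le x) _ hl
        have hsum : k + (lam.parts.erase k).sum = i := by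
          rw [← Multiset.sum_cons, hcons, lam.parts_sum]
        omega
      have hfilter : lam.parts.toFinset.filter (· < i) = lam.parts.toFinset := by
        apply Finset.filter_true_of_mem
        intro k hk
        exact hlt k (Multiset.mem_toFinset.1 hk)
      have hls : lam ≠ sing := by
        intro h
        rw [h] at hν2
        simp [hsing] at hν2
      rw [if_neg hls, hfilter, sum_del m lam hν2]
      ring
  rw [hstep_sum m, Qs, ← Finset.sum_add_distrib, Finset.sum_congr rfl (fun lam _ => hcase lam)]
  simp

lemma brec (m b : ℕ → ℝ) (hm0 : m 0 = 1) (hb0 : b 0 = 0)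
    (hB : PowerSeries.mk m - 1 = PowerSeries.mk b * PowerSeries.mk m) :
    ∀ n, 1 ≤ n → b n = m n - ∑ k ∈ Finset.Ico 1 n, b k * m (n - k) := by
  intro n hn
  have h := congrArg (PowerSeries.coeff n) hB
  rw [map_sub, PowerSeries.coeff_mk, PowerSeries.coeff_one, if_neg (by omega),
    PowerSeries.coeff_mul] at h
  simp only [PowerSeries.coeff_mk] at h
  rw [Finset.Nat.sum_antidiagonal_eq_sum_range_succ (fun j k => b j * m k)] at h
  rw [Finset.sum_range_succ, Finset.range_eq_Ico,
    Finset.sum_eq_sum_Ico_succ_bot (by omega : 0 < n)] at h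
  rw [hb0, Nat.sub_self, hm0] at h
  simp only [zero_mul, zero_add, mul_one, sub_zero] at h
  linarith

lemma key (m b : ℕ → ℝ) (hm0 : m 0 = 1) (hb0 : b 0 = 0)
    (hB : PowerSeries.mk m - 1 = PowerSeries.mk b * PowerSeries.mk m) :
    ∀ n, 1 ≤ n → b n = Qs m n := by
  intro n
  induction n using Nat.strong_induction_on with
  | _ n IH =>
    intro hn
    have hb := brec m b hm0 hb0 hB n hn
    have hc := comb m hn
    have hre : ∑ k ∈ Finset.Ico 1 n, b k * m (n - k)
        = ∑ k ∈ Finset.Ico 1 n, m k * Qs m (n - k) := by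
      have h1 : ∀ k ∈ Finset.Ico 1 n, b k * m (n - k) = Qs m k * m (n - k) := by
        intro k hk
        rw [Finset.mem_Ico] at hk
        rw [IH k hk.2 hk.1]
      rw [Finset.sum_congr rfl h1]
      refine Finset.sum_nbij' (fun k => n - k) (fun k => n - k) ?_ ?_ ?_ ?_ ?_
      · intro k hk; simp only [Finset.mem_Ico] at hk ⊢; omega
      · intro k hk; simp only [Finset.mem_Ico] at hk ⊢; omega
      · intro k hk; simp only [Finset.mem_Ico] at hk; omega
      · intro k hk; simp only [Finset.mem_Ico] at hk; omega
      · intro k hk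
        simp only [Finset.mem_Ico] at hk
        rw [Nat.sub_sub_self (by omega : k ≤ n)]
        ring
    linarith

/-- Abel parametrization of Boolean cumulants: if `M(z) − 1 = B(z)·M(z)` (the relation
defining the Boolean cumulants `b_i` of the moments `m_i`), then
`i! b_i = ∑_{λ ⊢ i} (−1)^{ν_λ−1} ν_λ! d_λ m̄_λ`, where `m̄_λ = ∏_j (j! m_j)^{r_j(λ)}`. -/
theorem boolean_cumulants_abel_parametrization (m b : ℕ → ℝ) (hm0 : m 0 = 1) (hb0 : b 0 = 0)
    (hB : PowerSeries.mk m - 1 = PowerSeries.mk b * PowerSeries.mk m)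
    (i : ℕ) (hi : 1 ≤ i) :
    (i.factorial : ℝ) * b i = ∑ lam : Nat.Partition i,
      (-1 : ℝ) ^ (lam.parts.card - 1) * (lam.parts.card.factorial : ℝ) * dcoef lam *
        (lam.parts.map (fun j => (j.factorial : ℝ) * m j)).prod := by
  have hterm : ∀ lam : Nat.Partition i,
      (-1 : ℝ) ^ (lam.parts.card - 1) * (lam.parts.card.factorial : ℝ) * dcoef lam *
        (lam.parts.map (fun j => (j.factorial : ℝ) * m j)).prod
      = (i.factorial : ℝ) * wfn m lam := by
    intro lam
    have hsplit : (lam.parts.map (fun j => (j.factorial : ℝ) * m j)).prod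
        = (lam.parts.map fun p => (p.factorial : ℝ)).prod * (lam.parts.map m).prod :=
      Multiset.prod_map_mul
    have hP0 : ((lam.parts.map fun p => ((p.factorial : ℝ))).prod) ≠ 0 := by
      have hpos : (0:ℝ) < (lam.parts.map fun p => ((p.factorial:ℝ))).prod := by
        apply Multiset.prod_pos
        intro a ha
        obtain ⟨p, _, rfl⟩ := Multiset.mem_map.1 ha
        exact_mod_cast Nat.factorial_pos p
      linarith
    have hR0 : (∏ j ∈ lam.parts.toFinset, ((lam.parts.count j).factorial : ℝ)) ≠ 0 := by
      have := Rpos lam; linarith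
    rw [dcoef, wfn, hsplit]
    field_simp
  have hsum : ∑ lam : Nat.Partition i,
      (-1 : ℝ) ^ (lam.parts.card - 1) * (lam.parts.card.factorial : ℝ) * dcoef lam *
        (lam.parts.map (fun j => (j.factorial : ℝ) * m j)).prod
      = ∑ lam : Nat.Partition i, (i.factorial : ℝ) * wfn m lam :=
    Finset.sum_congr rfl (fun lam _ => hterm lam)
  rw [hsum, ← Finset.mul_sum, key m b hm0 hb0 hB i hi]
  rfl
end
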